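/- arXiv:1503.05402 — 5 statements merged into one kernel-verified Lean document; each statement's English description precedes it below -/
import Mathlib

section
/- For integers p, q ≥ 1, the scattering polynomial φ^{(p,q)} satisfies the eigenvalue equation -(1 - z z̄) ∂²φ^{(p,q)}/∂z∂z̄ = pq · φ^{(p,q)} on ℂ; equivalently, -((1 - x² - y²)/4) Δ φ^{(p,q)} = pq φ^{(p,q)} where Δ is the Euclidean Laplacian. -/
open MeasureTheory Complex

/-- Wirtinger derivative ∂/∂z = (∂ₓ - i∂ᵧ)/2 -/
noncomputable def wdz (f : ℂ → ℂ) (z : ℂ) : ℂ :=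
  (fderiv ℝ f z 1 - Complex.I * fderiv ℝ f z Complex.I) / 2

/-- Wirtinger derivative ∂/∂z̄ = (∂ₓ + i∂ᵧ)/2 -/
noncomputable def wdzbar (f : ℂ → ℂ) (z : ℂ) : ℂ :=
  (fderiv ℝ f z 1 + Complex.I * fderiv ℝ f z Complex.I) / 2

/-- Scattering polynomial φ^{(p,q)} given by the Rodrigues-type formula
    φ^{(p,q)}(z) = ((-1)^p / (q (p+q-1)!)) (1 - z z̄) ∂^{p+q}/∂z^p ∂z̄^q (1 - z z̄)^{p+q-1}. -/
noncomputable def scatter (p q : ℕ) : ℂ → ℂ := fun z =>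
  ((-1 : ℂ) ^ p / (q * Nat.factorial (p + q - 1))) * (1 - z * (starRingEnd ℂ) z) *
    (wdz^[p] (wdzbar^[q] (fun w => (1 - w * (starRingEnd ℂ) w) ^ (p + q - 1))) z)

open MvPolynomial Complex

noncomputable def ev (P : MvPolynomial (Fin 2) ℂ) (z : ℂ) : ℂ :=
  aeval ![z, (starRingEnd ℂ) z] P

noncomputable def lmap (a b : ℂ) : ℂ →L[ℝ] ℂ :=
  a • (ContinuousLinearMap.id ℝ ℂ) + b • (Complex.conjCLE : ℂ ≃L[ℝ] ℂ).toContinuousLinearMap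

lemma lmap_apply (a b v : ℂ) : lmap a b v = a * v + b * (starRingEnd ℂ) v := by
  simp [lmap, smul_eq_mul]

lemma ev_add (P Q : MvPolynomial (Fin 2) ℂ) (z : ℂ) : ev (P + Q) z = ev P z + ev Q z := by
  simp [ev]

lemma ev_mul (P Q : MvPolynomial (Fin 2) ℂ) (z : ℂ) : ev (P * Q) z = ev P z * ev Q z := by
  simp [ev]

theorem hasFDerivAt_ev (P : MvPolynomial (Fin 2) ℂ) (z : ℂ) :
    HasFDerivAt (fun w => ev P w)
      (lmap (ev (pderiv 0 P) z) (ev (pderiv 1 P) z)) z := by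
  induction P using MvPolynomial.induction_on with
  | C a =>
      have h : lmap (ev (pderiv 0 (C a)) z) (ev (pderiv 1 (C a)) z) = 0 := by
        ext v; simp [lmap_apply, ev, pderiv_C]
      rw [h]
      have : (fun w : ℂ => ev (C a) w) = fun _ => (a : ℂ) := by
        funext w; simp [ev]
      rw [this]
      exact hasFDerivAt_const a z
  | add P Q hP hQ =>
      have h : lmap (ev (pderiv 0 (P + Q)) z) (ev (pderiv 1 (P + Q)) z)
          = lmap (ev (pderiv 0 P) z) (ev (pderiv 1 P) z)
            + lmap (ev (pderiv 0 Q) z) (ev (pderiv 1 Q) z) := by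
        ext v; simp [lmap_apply, ev, map_add]; ring
      have h2 : (fun w => ev (P + Q) w) = fun w => ev P w + ev Q w := by
        funext w; simp [ev_add]
      rw [h, h2]
      exact hP.add hQ
  | mul_X P n hP =>
      have hXn : HasFDerivAt (fun w => ev (X n) w)
          (lmap (ev (pderiv 0 (X n)) z) (ev (pderiv 1 (X n)) z)) z := by
        have h01 : n = 0 ∨ n = 1 := by omega
        rcases h01 with rfl | rfl
        · have h1 : (fun w : ℂ => ev (X 0) w) = fun w => w := by funext w; simp [ev]
          have h2 : lmap (ev (pderiv 0 (X (0:Fin 2))) z) (ev (pderiv 1 (X (0:Fin 2))) z)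
              = ContinuousLinearMap.id ℝ ℂ := by
            ext v
            simp [lmap_apply, ev, pderiv_X_self, pderiv_X_of_ne (show (0:Fin 2) ≠ 1 by decide)]
          rw [h1, h2]; exact hasFDerivAt_id z
        · have h1 : (fun w : ℂ => ev (X 1) w) = fun w => (starRingEnd ℂ) w := by
            funext w; simp [ev]
          have h2 : lmap (ev (pderiv 0 (X (1:Fin 2))) z) (ev (pderiv 1 (X (1:Fin 2))) z)
              = (Complex.conjCLE : ℂ ≃L[ℝ] ℂ).toContinuousLinearMap := by
            ext v
            simp [lmap_apply, ev, pderiv_X_self, pderiv_X_of_ne (show (1:Fin 2) ≠ 0 by decide)]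
          rw [h1]
          rw [show (fun w : ℂ => (starRingEnd ℂ) w) = ⇑Complex.conjCLE by funext w; simp]
          rw [h2]
          exact Complex.conjCLE.toContinuousLinearEquiv.hasFDerivAt
      have hmul : HasFDerivAt (fun w => ev P w * ev (X n) w) _ z := hP.mul hXn
      have h2 : (fun w => ev (P * X n) w) = fun w => ev P w * ev (X n) w := by
        funext w; simp [ev_mul]
      rw [h2]
      convert hmul using 1
      ext v
      simp only [lmap_apply, ContinuousLinearMap.add_apply, ContinuousLinearMap.smul_apply,
        smul_eq_mul, pderiv_mul, ev_add, ev_mul, map_add]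
      ring


noncomputable section
abbrev PolyC := MvPolynomial (Fin 2) ℂ

def Dz : PolyC → PolyC := fun P => pderiv 0 P
def Dw : PolyC → PolyC := fun P => pderiv 1 P

lemma pd_comm (P : PolyC) : pderiv 0 (pderiv 1 P) = pderiv 1 (pderiv 0 P) := by
  induction P using MvPolynomial.induction_on with
  | C a => simp [pderiv_C]
  | add P Q hP hQ => simp [map_add, hP, hQ]
  | mul_X P n hP =>
      have h01 : n = 0 ∨ n = 1 := by omega
      rcases h01 with rfl | rfl <;>
        simp [pderiv_mul, pderiv_X_self, pderiv_X_of_ne, map_add, hP,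
          pderiv_X_of_ne (show (0:Fin 2) ≠ 1 by decide),
          pderiv_X_of_ne (show (1:Fin 2) ≠ 0 by decide)] <;> ring

lemma Dz_Dw_iter (k : ℕ) (P : PolyC) : Dz (Dw^[k] P) = Dw^[k] (Dz P) := by
  induction k generalizing P with
  | zero => rfl
  | succ k ih =>
      rw [Function.iterate_succ_apply, Function.iterate_succ_apply, ih]
      exact congrArg (Dw^[k]) (pd_comm P)

lemma Dz_iter_add (k : ℕ) (P Q : PolyC) : Dz^[k] (P + Q) = Dz^[k] P + Dz^[k] Q := by
  induction k generalizing P Q with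
  | zero => rfl
  | succ k ih => rw [Function.iterate_succ_apply, Function.iterate_succ_apply,
      Function.iterate_succ_apply, show Dz (P + Q) = Dz P + Dz Q from map_add _ _ _, ih]

lemma Dw_iter_add (k : ℕ) (P Q : PolyC) : Dw^[k] (P + Q) = Dw^[k] P + Dw^[k] Q := by
  induction k generalizing P Q with
  | zero => rfl
  | succ k ih => rw [Function.iterate_succ_apply, Function.iterate_succ_apply,
      Function.iterate_succ_apply, show Dw (P + Q) = Dw P + Dw Q from map_add _ _ _, ih]

lemma Dz_iter_sub (k : ℕ) (P Q : PolyC) : Dz^[k] (P - Q) = Dz^[k] P - Dz^[k] Q := by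
  induction k generalizing P Q with
  | zero => rfl
  | succ k ih => rw [Function.iterate_succ_apply, Function.iterate_succ_apply,
      Function.iterate_succ_apply, show Dz (P - Q) = Dz P - Dz Q from map_sub _ _ _, ih]

lemma Dw_iter_sub (k : ℕ) (P Q : PolyC) : Dw^[k] (P - Q) = Dw^[k] P - Dw^[k] Q := by
  induction k generalizing P Q with
  | zero => rfl
  | succ k ih => rw [Function.iterate_succ_apply, Function.iterate_succ_apply,
      Function.iterate_succ_apply, show Dw (P - Q) = Dw P - Dw Q from map_sub _ _ _, ih]

lemma Dz_iter_cast_mul (k c : ℕ) (P : PolyC) :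
    Dz^[k] ((c : PolyC) * P) = (c : PolyC) * Dz^[k] P := by
  induction k generalizing P with
  | zero => rfl
  | succ k ih =>
      rw [Function.iterate_succ_apply, Function.iterate_succ_apply,
        show Dz ((c : PolyC) * P) = (c : PolyC) * Dz P by
          show pderiv 0 ((c : PolyC) * P) = (c : PolyC) * pderiv 0 P
          rw [show ((c : PolyC)) = C ((c : ℕ) : ℂ) by simp, pderiv_C_mul], ih]

lemma Dw_iter_cast_mul (k c : ℕ) (P : PolyC) :
    Dw^[k] ((c : PolyC) * P) = (c : PolyC) * Dw^[k] P := by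
  induction k generalizing P with
  | zero => rfl
  | succ k ih =>
      rw [Function.iterate_succ_apply, Function.iterate_succ_apply,
        show Dw ((c : PolyC) * P) = (c : PolyC) * Dw P by
          show pderiv 1 ((c : PolyC) * P) = (c : PolyC) * pderiv 1 P
          rw [show ((c : PolyC)) = C ((c : ℕ) : ℂ) by simp, pderiv_C_mul], ih]

/-- Dz passes through multiplication by X 1 -/
lemma Dz_iter_X1_mul (k : ℕ) (P : PolyC) : Dz^[k] (X 1 * P) = X 1 * Dz^[k] P := by
  induction k generalizing P with
  | zero => rfl
  | succ k ih =>
      rw [Function.iterate_succ_apply, Function.iterate_succ_apply,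
        show Dz (X 1 * P) = X 1 * Dz P by
          show pderiv 0 (X 1 * P) = X 1 * pderiv 0 P
          rw [pderiv_mul, pderiv_X_of_ne (show (1:Fin 2) ≠ 0 by decide)]; ring, ih]

lemma Dw_iter_X0_mul (k : ℕ) (P : PolyC) : Dw^[k] (X 0 * P) = X 0 * Dw^[k] P := by
  induction k generalizing P with
  | zero => rfl
  | succ k ih =>
      rw [Function.iterate_succ_apply, Function.iterate_succ_apply,
        show Dw (X 0 * P) = X 0 * Dw P by
          show pderiv 1 (X 0 * P) = X 0 * pderiv 1 P
          rw [pderiv_mul, pderiv_X_of_ne (show (0:Fin 2) ≠ 1 by decide)]; ring, ih]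

lemma Dz_iter_X0_mul (k : ℕ) (P : PolyC) :
    Dz^[k+1] (X 0 * P) = X 0 * Dz^[k+1] P + ((k+1 : ℕ) : PolyC) * Dz^[k] P := by
  induction k generalizing P with
  | zero =>
      show pderiv 0 (X 0 * P) = X 0 * pderiv 0 P + _
      rw [pderiv_mul, pderiv_X_self]
      simp only [Function.iterate_zero_apply]; push_cast; ring
  | succ k ih =>
      rw [Function.iterate_succ_apply,
        show Dz (X 0 * P) = P + X 0 * Dz P by
          show pderiv 0 (X 0 * P) = P + X 0 * pderiv 0 P
          rw [pderiv_mul, pderiv_X_self]; ring,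
        Dz_iter_add, ih]
      simp only [← Function.iterate_succ_apply]
      push_cast; ring

lemma Dw_iter_X1_mul (k : ℕ) (P : PolyC) :
    Dw^[k+1] (X 1 * P) = X 1 * Dw^[k+1] P + ((k+1 : ℕ) : PolyC) * Dw^[k] P := by
  induction k generalizing P with
  | zero =>
      show pderiv 1 (X 1 * P) = X 1 * pderiv 1 P + _
      rw [pderiv_mul, pderiv_X_self]
      simp only [Function.iterate_zero_apply]; push_cast; ring
  | succ k ih =>
      rw [Function.iterate_succ_apply,
        show Dw (X 1 * P) = P + X 1 * Dw P by
          show pderiv 1 (X 1 * P) = P + X 1 * pderiv 1 P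
          rw [pderiv_mul, pderiv_X_self]; ring,
        Dw_iter_add, ih]
      simp only [← Function.iterate_succ_apply]
      push_cast; ring
end

noncomputable section
open MvPolynomial

def FF (n : ℕ) : PolyC := (1 - X 0 * X 1)^n

lemma cast_eq_C (c : ℂ) : ∀ (n : ℕ), ((n : ℕ) : PolyC) = C ((n:ℕ) : ℂ) := by simp

lemma Dz_neg_cast_mul (c : ℕ) (P : PolyC) : Dz (-(c:PolyC) * P) = -(c:PolyC) * Dz P := by
  show pderiv 0 (-(c:PolyC) * P) = -(c:PolyC) * pderiv 0 P
  rw [show (-(c:PolyC)) = C (-((c:ℕ):ℂ)) by simp, pderiv_C_mul]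

lemma E1 (n : ℕ) : Dz (FF n) = -((n : ℕ) : PolyC) * (X 1 * FF (n-1)) := by
  show pderiv 0 ((1 - X 0 * X 1)^n) = -((n : ℕ) : PolyC) * (X 1 * (1 - X 0 * X 1)^(n-1))
  rw [pderiv_pow]
  simp [pderiv_mul, map_sub, pderiv_one, pderiv_X_self,
    pderiv_X_of_ne (show (1:Fin 2) ≠ 0 by decide)]
  ring

lemma E2 (n : ℕ) : Dw (FF n) = -((n : ℕ) : PolyC) * (X 0 * FF (n-1)) := by
  show pderiv 1 ((1 - X 0 * X 1)^n) = -((n : ℕ) : PolyC) * (X 0 * (1 - X 0 * X 1)^(n-1))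
  rw [pderiv_pow]
  simp [pderiv_mul, map_sub, pderiv_one, pderiv_X_self,
    pderiv_X_of_ne (show (0:Fin 2) ≠ 1 by decide)]
  ring

lemma E3' (m : ℕ) :
    (1 - X 0 * X 1) * Dz (Dw (FF (m+1))) + ((m+2 : ℕ) : PolyC) * (X 0 * Dz (FF (m+1)))
      = 2 * (X 0 * Dz (FF (m+1))) - ((m+1 : ℕ) : PolyC) * FF (m+1) := by
  rcases m with _ | m
  · show (1 - X 0 * X 1) * pderiv 0 (pderiv 1 (FF 1)) + _ * (X 0 * pderiv 0 (FF 1))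
        = 2 * (X 0 * pderiv 0 (FF 1)) - _ * FF 1
    simp only [FF, pow_one]
    simp [pderiv_mul, map_sub, pderiv_one, pderiv_X_self,
      pderiv_X_of_ne (show (1:Fin 2) ≠ 0 by decide),
      pderiv_X_of_ne (show (0:Fin 2) ≠ 1 by decide)]
    push_cast; ring
  · have h1 : Dz (FF (m+1+1)) = -((m+2:ℕ):PolyC) * (X 1 * FF (m+1)) := by
      simpa using E1 (m+2)
    have h2 : Dz (Dw (FF (m+1+1)))
        = -((m+2:ℕ):PolyC) * (FF (m+1) + X 0 * (-((m+1:ℕ):PolyC) * (X 1 * FF m))) := by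
      rw [show Dw (FF (m+1+1)) = -((m+2:ℕ):PolyC) * (X 0 * FF (m+1)) by simpa using E2 (m+2),
        Dz_neg_cast_mul]
      congr 1
      show pderiv 0 (X 0 * FF (m+1)) = _
      rw [pderiv_mul, pderiv_X_self,
        show (pderiv 0 (FF (m+1)) : PolyC) = Dz (FF (m+1)) from rfl,
        show Dz (FF (m+1)) = -((m+1:ℕ):PolyC) * (X 1 * FF m) by simpa using E1 (m+1)]
      ring
    rw [h1, h2, show FF (m+1+1) = FF (m+1) * (1 - X 0 * X 1) from pow_succ _ _,
      show FF (m+1) = FF m * (1 - X 0 * X 1) from pow_succ _ _]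
    push_cast; ring

lemma Dw_Dz_iter (k : ℕ) (P : PolyC) : Dw (Dz^[k] P) = Dz^[k] (Dw P) := by
  induction k generalizing P with
  | zero => rfl
  | succ k ih =>
      rw [Function.iterate_succ_apply, Function.iterate_succ_apply, ih]
      exact congrArg (Dz^[k]) (pd_comm P).symm

lemma iter_shift (k j : ℕ) (P : PolyC) :
    Dz^[k] (Dw^[j] (Dz P)) = Dz^[k+1] (Dw^[j] P) := by
  rw [← Dz_Dw_iter, ← Function.iterate_succ_apply]

lemma iter_shift_w (k j : ℕ) (P : PolyC) :
    Dz^[k] (Dw^[j] (Dw P)) = Dz^[k] (Dw^[j+1] P) := by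
  rw [← Function.iterate_succ_apply]

lemma E3 (a b : ℕ) :
    (1 - X 0 * X 1) * Dz (Dw (FF (a+b+1)))
      + ((a+1 : ℕ) : PolyC) * (X 1 * Dw (FF (a+b+1)))
      + ((b+1 : ℕ) : PolyC) * (X 0 * Dz (FF (a+b+1)))
      = X 0 * Dz (FF (a+b+1)) + X 1 * Dw (FF (a+b+1))
          - ((a+b+1 : ℕ) : PolyC) * FF (a+b+1) := by
  have hsym : X 1 * Dw (FF (a+b+1)) = X 0 * Dz (FF (a+b+1)) := by
    rw [E1, E2]; ring
  have h := E3' (a+b)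
  rw [hsym]
  push_cast at h ⊢
  linear_combination h

theorem core (a b : ℕ) :
    pderiv 0 (pderiv 1 ((1 - X 0 * X 1) * Dz^[a+1] (Dw^[b+1] (FF (a+b+1)))))
      = -((((a+1)*(b+1) : ℕ)) : PolyC) * Dz^[a+1] (Dw^[b+1] (FF (a+b+1))) := by
  set Φ := FF (a+b+1) with hΦ
  set G := Dz^[a+1] (Dw^[b+1] Φ) with hG
  set G10 := Dz^[a+2] (Dw^[b+1] Φ) with hG10
  set G01 := Dz^[a+1] (Dw^[b+2] Φ) with hG01
  set G11 := Dz^[a+2] (Dw^[b+2] Φ) with hG11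
  set SZ := Dz^[a+1] (Dw^[b+1] (X 0 * Dz Φ)) with hSZ
  set SW := Dz^[a+1] (Dw^[b+1] (X 1 * Dw Φ)) with hSW
  set SQ := Dz^[a+1] (Dw^[b+1] (X 0 * (X 1 * Dz (Dw Φ)))) with hSQ
  set SU := Dz^[a+1] (Dw^[b+1] ((1 - X 0 * X 1) * Dz (Dw Φ))) with hSU
  -- commutation of single derivatives with the iterated operator
  have h1 : Dz G = G10 := by
    rw [hG, hG10, ← Function.iterate_succ_apply' Dz (a+1), show a+1+1 = a+2 from rfl]
  have h2 : Dw G = G01 := by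
    rw [hG, hG01, Dw_Dz_iter, ← Function.iterate_succ_apply' Dw (b+1), show b+1+1 = b+2 from rfl]
  have h3 : Dz (Dw G) = G11 := by
    rw [h2, hG01, hG11, ← Function.iterate_succ_apply' Dz (a+1), show a+1+1 = a+2 from rfl]
  -- structure of S applied to products
  have hz : SZ = X 0 * G10 + ((a+1 : ℕ) : PolyC) * G := by
    rw [hSZ, Dw_iter_X0_mul, Dz_iter_X0_mul, iter_shift, iter_shift, hG10, hG]
  have hw : SW = X 1 * G01 + ((b+1 : ℕ) : PolyC) * G := by
    rw [hSW, Dw_iter_X1_mul, Dz_iter_add, Dz_iter_X1_mul, Dz_iter_cast_mul,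
      iter_shift_w, iter_shift_w, hG01, hG]
  have hq : SQ = X 0 * X 1 * G11 + ((b+1 : ℕ) : PolyC) * (X 0 * G10)
      + ((a+1 : ℕ) : PolyC) * (X 1 * G01) + (((a+1)*(b+1) : ℕ) : PolyC) * G := by
    rw [hSQ, Dw_iter_X0_mul, Dw_iter_X1_mul, Dz_iter_X0_mul]
    simp only [Dz_iter_add, Dz_iter_X1_mul, Dz_iter_cast_mul, iter_shift, iter_shift_w]
    rw [show a+1+1 = a+2 from rfl, show b+1+1 = b+2 from rfl, ← hG11, ← hG10, ← hG01, ← hG]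
    push_cast
    ring
  have hsu : SU = G11 - SQ := by
    rw [hSU, hSQ, show (1 - X 0 * X 1) * Dz (Dw Φ)
        = Dz (Dw Φ) - X 0 * (X 1 * Dz (Dw Φ)) by ring]
    rw [Dw_iter_sub, Dz_iter_sub, iter_shift, iter_shift_w,
      show a+1+1 = a+2 from rfl, show b+1+1 = b+2 from rfl, ← hG11]
  -- S applied to the F-level identity E3
  have he3 : SU + ((a+1 : ℕ) : PolyC) * SW + ((b+1 : ℕ) : PolyC) * SZ
      = SZ + SW - ((a+b+1 : ℕ) : PolyC) * G := by
    have h := congrArg (fun P => Dz^[a+1] (Dw^[b+1] P)) (E3 a b)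
    simp only [Dw_iter_add, Dz_iter_add, Dw_iter_sub, Dz_iter_sub,
      Dw_iter_cast_mul, Dz_iter_cast_mul] at h
    exact h
  -- expansion of the double derivative of (1-U)*G
  have hexp : pderiv 0 (pderiv 1 ((1 - X 0 * X 1) * G))
      = -G - X 0 * Dz G - X 1 * Dw G + (1 - X 0 * X 1) * Dz (Dw G) := by
    have hh : pderiv 1 ((1 - X 0 * X 1) * G) = -(X 0) * G + (1 - X 0 * X 1) * Dw G := by
      rw [pderiv_mul]
      simp [Dw, pderiv_mul, map_sub, pderiv_one, pderiv_X_self,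
        pderiv_X_of_ne (show (0:Fin 2) ≠ 1 by decide)]
    rw [hh, map_add, pderiv_mul, pderiv_mul]
    simp [Dz, Dw, pderiv_mul, map_sub, map_neg, pderiv_one, pderiv_X_self,
      pderiv_X_of_ne (show (1:Fin 2) ≠ 0 by decide)]
    ring
  have ha : X 0 * G10 = SZ - ((a+1 : ℕ) : PolyC) * G := by linear_combination -hz
  have hb : X 1 * G01 = SW - ((b+1 : ℕ) : PolyC) * G := by linear_combination -hw
  have hc : (1 - X 0 * X 1) * G11
      = SU + ((b+1 : ℕ) : PolyC) * SZ + ((a+1 : ℕ) : PolyC) * SW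
        - (((a+1)*(b+1) : ℕ) : PolyC) * G := by
    push_cast at hsu hq ha hb ⊢
    linear_combination -hsu + hq + ((b:PolyC)+1) * ha + ((a:PolyC)+1) * hb
  rw [hexp, h3, h1, h2]
  push_cast at ha hb hc he3 ⊢
  linear_combination -ha - hb + hc + he3


-- ## Glue: Wirtinger derivatives of polynomial evaluations

lemma wdz_ev (P : MvPolynomial (Fin 2) ℂ) (z : ℂ) :
    wdz (fun w => ev P w) z = ev (MvPolynomial.pderiv 0 P) z := by
  rw [wdz, (hasFDerivAt_ev P z).fderiv]
  simp only [lmap_apply, map_one, Complex.conj_I]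
  set A := ev (MvPolynomial.pderiv 0 P) z
  set B := ev (MvPolynomial.pderiv 1 P) z
  field_simp
  linear_combination (B - A) * Complex.I_mul_I

lemma wdzbar_ev (P : MvPolynomial (Fin 2) ℂ) (z : ℂ) :
    wdzbar (fun w => ev P w) z = ev (MvPolynomial.pderiv 1 P) z := by
  rw [wdzbar, (hasFDerivAt_ev P z).fderiv]
  simp only [lmap_apply, map_one, Complex.conj_I]
  set A := ev (MvPolynomial.pderiv 0 P) z
  set B := ev (MvPolynomial.pderiv 1 P) z
  field_simp
  linear_combination (A - B) * Complex.I_mul_I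

lemma wdz_iter_ev (k : ℕ) (P : MvPolynomial (Fin 2) ℂ) :
    wdz^[k] (fun w => ev P w) = fun w => ev (Dz^[k] P) w := by
  induction k generalizing P with
  | zero => rfl
  | succ k ih =>
      rw [Function.iterate_succ_apply, Function.iterate_succ_apply,
        show wdz (fun w => ev P w) = fun w => ev (Dz P) w from funext (wdz_ev P), ih]

lemma wdzbar_iter_ev (k : ℕ) (P : MvPolynomial (Fin 2) ℂ) :
    wdzbar^[k] (fun w => ev P w) = fun w => ev (Dw^[k] P) w := by
  induction k generalizing P with
  | zero => rfl
  | succ k ih =>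
      rw [Function.iterate_succ_apply, Function.iterate_succ_apply,
        show wdzbar (fun w => ev P w) = fun w => ev (Dw P) w from funext (wdzbar_ev P), ih]

lemma hscatter (a b : ℕ) :
    scatter (a+1) (b+1) = fun w => ev
      (MvPolynomial.C ((-1 : ℂ) ^ (a+1) / ((b+1 : ℕ) * (Nat.factorial (a+b+1) : ℕ)))
        * ((1 - MvPolynomial.X 0 * MvPolynomial.X 1)
            * Dz^[a+1] (Dw^[b+1] (FF (a+b+1))))) w := by
  funext z
  rw [scatter, show (a+1)+(b+1)-1 = a+b+1 from by omega,
    show (fun w : ℂ => (1 - w * (starRingEnd ℂ) w) ^ (a+b+1))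
        = fun w => ev (FF (a+b+1)) w from by funext w; simp [ev, FF],
    wdzbar_iter_ev, wdz_iter_ev]
  simp [ev, FF]
  ring


/-- Scattering polynomials are eigenfunctions of -Δ̃ = -(1 - z z̄)∂²/∂z∂z̄ with eigenvalue pq. -/
theorem scatter_eigenfunction (p q : ℕ) (hp : 1 ≤ p) (hq : 1 ≤ q) (z : ℂ) :
    -((1 - z * (starRingEnd ℂ) z) * wdz (wdzbar (scatter p q)) z)
      = (p * q : ℂ) * scatter p q z := by
  obtain ⟨a, rfl⟩ : ∃ a, p = a + 1 := ⟨p - 1, by omega⟩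
  obtain ⟨b, rfl⟩ : ∃ b, q = b + 1 := ⟨q - 1, by omega⟩
  set c : ℂ := (-1 : ℂ) ^ (a+1) / ((b+1 : ℕ) * (Nat.factorial (a+b+1) : ℕ)) with hc
  set Φ : PolyC := MvPolynomial.C c
      * ((1 - MvPolynomial.X 0 * MvPolynomial.X 1)
          * Dz^[a+1] (Dw^[b+1] (FF (a+b+1)))) with hΦ
  have hs : scatter (a+1) (b+1) = fun w => ev Φ w := hscatter a b
  rw [hs, show wdzbar (fun w => ev Φ w) = fun w => ev (MvPolynomial.pderiv 1 Φ) w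
      from funext (wdzbar_ev Φ), wdz_ev]
  have hpoly : MvPolynomial.pderiv 0 (MvPolynomial.pderiv 1 Φ)
      = MvPolynomial.C c * (-((((a+1)*(b+1) : ℕ)) : PolyC)
          * Dz^[a+1] (Dw^[b+1] (FF (a+b+1)))) := by
    rw [hΦ, MvPolynomial.pderiv_C_mul, MvPolynomial.pderiv_C_mul, core]
  rw [hpoly]
  simp only [hΦ]
  simp only [ev, map_mul, map_add, map_neg, map_sub, map_one, map_natCast,
    MvPolynomial.aeval_C, MvPolynomial.aeval_X, Algebra.algebraMap_self, RingHom.id_apply,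
    Matrix.cons_val_zero, Matrix.cons_val_one, Matrix.head_cons]
  push_cast
  ring_nf
end
end

section
/- For integers p, q ≥ 1, with m = |p - q| and ν = min{p,q} - 1, the scattering polynomial satisfies φ^{(p,q)}(z) = ((-1)^{q+ν+1}/q) (1 - z z̄) z^{m+ν-p+1} z̄^{m+ν-q+1} Σ_{j=0}^{ν} (-1)^j ((j+ν+m+1)! / (j! (j+m)! (ν-j)!)) (z z̄)^j. -/
open MeasureTheory Complex

/-! ### Auxiliary machinery: Wirtinger derivatives of monomials `c * z^a * z̄^b` -/

/-- The basic monomial `c z^a z̄^b`. -/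
noncomputable def Mfd (c : ℂ) (a b : ℕ) (z : ℂ) : ℂ := c * z ^ a * ((starRingEnd ℂ) z) ^ b

/-- The real Fréchet derivative of `Mfd c a b`. -/
noncomputable def Lm (c : ℂ) (a b : ℕ) (z : ℂ) : ℂ →L[ℝ] ℂ :=
  (c * a * z ^ (a-1) * ((starRingEnd ℂ) z) ^ b) • (ContinuousLinearMap.id ℝ ℂ) +
  (c * z ^ a * b * ((starRingEnd ℂ) z) ^ (b-1)) •
    (Complex.conjCLE.toContinuousLinearMap : ℂ →L[ℝ] ℂ)

theorem hasFDerivAt_Mfd (c : ℂ) (a b : ℕ) (z : ℂ) : HasFDerivAt (Mfd c a b) (Lm c a b z) z := by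
  have h1 : HasFDerivAt (fun z : ℂ => z ^ a)
      (((a : ℂ) * z ^ (a-1)) • (ContinuousLinearMap.id ℝ ℂ)) z := by
    have h := ((hasDerivAt_pow a z).hasFDerivAt).restrictScalars ℝ
    convert h using 1
    ext w
    simp [smul_eq_mul]
    · rfl
    · ext w
      simp [mul_comm]
  have h2 : HasFDerivAt (fun z : ℂ => ((starRingEnd ℂ) z) ^ b)
      (((b : ℂ) * ((starRingEnd ℂ) z) ^ (b-1)) •
        (Complex.conjCLE.toContinuousLinearMap : ℂ →L[ℝ] ℂ)) z := by
    have hc : HasFDerivAt (fun z : ℂ => (starRingEnd ℂ) z)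
        (Complex.conjCLE.toContinuousLinearMap : ℂ →L[ℝ] ℂ) z :=
      Complex.conjCLE.hasFDerivAt
    have hp := ((hasDerivAt_pow b ((starRingEnd ℂ) z)).hasFDerivAt).restrictScalars ℝ
    have := hp.comp z hc
    convert this using 1
    ext w
    simp [smul_eq_mul]
    · rfl
    · rfl
    · ext w
      simp [mul_comm]
  have h3 := (h1.const_mul c).mul h2
  have he : Lm c a b z = (c * z ^ a) • ((b : ℂ) * (starRingEnd ℂ) z ^ (b - 1)) •
      (Complex.conjCLE.toContinuousLinearMap : ℂ →L[ℝ] ℂ) +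
      ((starRingEnd ℂ) z ^ b) • c • (((a:ℂ) * z ^ (a - 1)) • ContinuousLinearMap.id ℝ ℂ) := by
    ext w
    simp [Lm, smul_eq_mul]
    ring
  rw [he]
  exact h3

theorem fderiv_Mfd (c : ℂ) (a b : ℕ) (z : ℂ) : fderiv ℝ (Mfd c a b) z = Lm c a b z :=
  (hasFDerivAt_Mfd c a b z).fderiv

theorem wdz_Mfd (c : ℂ) (a b : ℕ) : wdz (Mfd c a b) = Mfd (c * a) (a-1) b := by
  funext z
  simp only [wdz, fderiv_Mfd, Lm, Mfd, ContinuousLinearMap.add_apply,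
    ContinuousLinearMap.smul_apply, ContinuousLinearMap.id_apply, ContinuousLinearEquiv.coe_coe,
    Complex.conjCLE_apply, smul_eq_mul]
  simp [Complex.conj_I]
  ring_nf
  rw [Complex.I_sq]
  ring

theorem wdzbar_Mfd (c : ℂ) (a b : ℕ) : wdzbar (Mfd c a b) = Mfd (c * b) a (b-1) := by
  funext z
  simp only [wdzbar, fderiv_Mfd, Lm, Mfd, ContinuousLinearMap.add_apply,
    ContinuousLinearMap.smul_apply, ContinuousLinearMap.id_apply, ContinuousLinearEquiv.coe_coe,
    Complex.conjCLE_apply, smul_eq_mul]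
  simp [Complex.conj_I]
  ring_nf
  rw [Complex.I_sq]
  ring

theorem descFactorial_succ' (a p : ℕ) :
    a.descFactorial (p+1) = a * (a-1).descFactorial p := by
  cases a with
  | zero => simp
  | succ n => exact Nat.succ_descFactorial_succ n p

section
variable {ι : Type*} (s : Finset ι) (c : ι → ℂ) (a b : ι → ℕ)

theorem wdz_sum_Mfd :
    wdz (fun z => ∑ i ∈ s, Mfd (c i) (a i) (b i) z) =
      fun z => ∑ i ∈ s, Mfd (c i * a i) (a i - 1) (b i) z := by
  funext z
  have hd : ∀ i ∈ s, DifferentiableAt ℝ (fun z => Mfd (c i) (a i) (b i) z) z :=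
    fun i _ => (hasFDerivAt_Mfd (c i) (a i) (b i) z).differentiableAt
  have h := fderiv_fun_sum (u := s) (𝕜 := ℝ)
      (A := fun i (z : ℂ) => Mfd (c i) (a i) (b i) z) (x := z) hd
  simp only [wdz, h, ContinuousLinearMap.sum_apply]
  rw [Finset.mul_sum, ← Finset.sum_sub_distrib, Finset.sum_div]
  refine Finset.sum_congr rfl fun i _ => ?_
  rw [← wdz_Mfd]
  rfl

theorem wdzbar_sum_Mfd :
    wdzbar (fun z => ∑ i ∈ s, Mfd (c i) (a i) (b i) z) =
      fun z => ∑ i ∈ s, Mfd (c i * b i) (a i) (b i - 1) z := by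
  funext z
  have hd : ∀ i ∈ s, DifferentiableAt ℝ (fun z => Mfd (c i) (a i) (b i) z) z :=
    fun i _ => (hasFDerivAt_Mfd (c i) (a i) (b i) z).differentiableAt
  have h := fderiv_fun_sum (u := s) (𝕜 := ℝ)
      (A := fun i (z : ℂ) => Mfd (c i) (a i) (b i) z) (x := z) hd
  simp only [wdzbar, h, ContinuousLinearMap.sum_apply]
  rw [Finset.mul_sum, ← Finset.sum_add_distrib, Finset.sum_div]
  refine Finset.sum_congr rfl fun i _ => ?_
  rw [← wdzbar_Mfd]
  rfl

theorem wdz_iter_sum_Mfd (p : ℕ) :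
    wdz^[p] (fun z => ∑ i ∈ s, Mfd (c i) (a i) (b i) z) =
      fun z => ∑ i ∈ s, Mfd (c i * (a i).descFactorial p) (a i - p) (b i) z := by
  induction p generalizing c a with
  | zero => simp [Mfd]
  | succ p ih =>
      rw [Function.iterate_succ_apply, wdz_sum_Mfd, ih]
      funext z
      refine Finset.sum_congr rfl fun i _ => ?_
      simp only [Mfd, descFactorial_succ' (a i) p]
      push_cast
      rw [Nat.sub_sub, Nat.add_comm 1 p]
      ring

theorem wdzbar_iter_sum_Mfd (q : ℕ) :
    wdzbar^[q] (fun z => ∑ i ∈ s, Mfd (c i) (a i) (b i) z) =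
      fun z => ∑ i ∈ s, Mfd (c i * (b i).descFactorial q) (a i) (b i - q) z := by
  induction q generalizing c a b with
  | zero => simp [Mfd]
  | succ q ih =>
      rw [Function.iterate_succ_apply, wdzbar_sum_Mfd, ih]
      funext z
      refine Finset.sum_congr rfl fun i _ => ?_
      simp only [Mfd, descFactorial_succ' (b i) q]
      push_cast
      rw [Nat.sub_sub, Nat.add_comm 1 q]
      ring
end

theorem base_rep (n : ℕ) : (fun w : ℂ => (1 - w * (starRingEnd ℂ) w) ^ n) =
    fun z => ∑ i ∈ Finset.range (n+1), Mfd ((n.choose i : ℂ) * (-1)^i) i i z := by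
  funext z
  have h : (1 - z * (starRingEnd ℂ) z) = (-(z * (starRingEnd ℂ) z)) + 1 := by ring
  rw [h, add_pow]
  refine Finset.sum_congr rfl fun i _ => ?_
  rw [neg_eq_neg_one_mul]
  simp only [Mfd, one_pow, mul_pow]
  ring

theorem natkey (p q j : ℕ) (hp : 1 ≤ p) (hq : 1 ≤ q) (h : p ≤ q) (hj : j < p) :
    (p+q-1).choose (q+j) * ((q+j).descFactorial q) * ((q+j).descFactorial p) *
      (j.factorial * (j+(q-p)).factorial * ((p-1)-j).factorial)
    = (q+j).factorial * (p+q-1).factorial := by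
  have f1 := Nat.factorial_mul_descFactorial (show q ≤ q+j by omega)
  rw [show q + j - q = j from by omega] at f1
  have f2 := Nat.factorial_mul_descFactorial (show p ≤ q+j by omega)
  rw [show q + j - p = j + (q-p) from by omega] at f2
  have f3 := Nat.choose_mul_factorial_mul_factorial (show q+j ≤ p+q-1 from by omega)
  rw [show p+q-1-(q+j) = (p-1)-j from by omega] at f3
  calc (p+q-1).choose (q+j) * ((q+j).descFactorial q) * ((q+j).descFactorial p) *
      (j.factorial * (j+(q-p)).factorial * ((p-1)-j).factorial)
      = (j.factorial * (q+j).descFactorial q) * ((j+(q-p)).factorial * (q+j).descFactorial p) *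
        ((p+q-1).choose (q+j) * ((p-1)-j).factorial) := by ring
    _ = (q+j).factorial * (q+j).factorial * ((p+q-1).choose (q+j) * ((p-1)-j).factorial) := by
        rw [f1, f2]
    _ = (q+j).factorial * ((p+q-1).choose (q+j) * (q+j).factorial * ((p-1)-j).factorial) := by
        ring
    _ = (q+j).factorial * (p+q-1).factorial := by rw [f3]

theorem term_id (p q j : ℕ) (hp : 1 ≤ p) (hq : 1 ≤ q) (h : p ≤ q) (hj : j < p) (z u : ℂ) :
    ((-1:ℂ)^p / (q * (p+q-1).factorial)) * u *
      Mfd ((((p+q-1).choose (q+j) : ℂ) * (-1)^(q+j) * ((q+j).descFactorial q : ℂ)) *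
        ((q+j).descFactorial p : ℂ)) (q+j-p) (q+j-q) z
    = ((-1:ℂ)^(q+(p-1)+1) / q) * u * z^(q-p) * ((starRingEnd ℂ) z)^0 *
      ((-1:ℂ)^j * (((j+(p-1)+(q-p)+1).factorial : ℂ) /
        ((j.factorial : ℂ) * ((j+(q-p)).factorial : ℂ) * (((p-1)-j).factorial : ℂ))) *
        (z * (starRingEnd ℂ) z)^j) := by
  have hC : ((((p+q-1).choose (q+j)) * ((q+j).descFactorial q) * ((q+j).descFactorial p) *
      (j.factorial * (j+(q-p)).factorial * ((p-1)-j).factorial) : ℕ) : ℂ)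
      = (((q+j).factorial * (p+q-1).factorial : ℕ) : ℂ) := by
    exact_mod_cast congrArg (Nat.cast : ℕ → ℂ) (natkey p q j hp hq h hj)
  push_cast at hC
  rw [show q + j - q = j from by omega, show q + j - p = (q - p) + j from by omega,
    show q + (p-1) + 1 = q + p from by omega, show j + (p-1) + (q-p) + 1 = q + j from by omega]
  have fne : ∀ m:ℕ, ((m.factorial : ℂ)) ≠ 0 := fun m => Nat.cast_ne_zero.mpr m.factorial_ne_zero
  have key : (((p+q-1).choose (q+j) : ℂ) * ((q+j).descFactorial q : ℂ) *
      ((q+j).descFactorial p : ℂ)) / ((p+q-1).factorial : ℂ)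
      = ((q+j).factorial : ℂ) /
        ((j.factorial : ℂ) * ((j+(q-p)).factorial : ℂ) * (((p-1)-j).factorial : ℂ)) := by
    rw [div_eq_div_iff (fne _) (by exact mul_ne_zero (mul_ne_zero (fne _) (fne _)) (fne _))]
    linear_combination hC
  simp only [Mfd, pow_zero, pow_add, mul_pow]
  linear_combination ((-1:ℂ)^(q+p+j) * u * z^(q-p) * z^j * ((starRingEnd ℂ) z)^j / q) * key

theorem natkey2 (p q j : ℕ) (hp : 1 ≤ p) (hq : 1 ≤ q) (h : q ≤ p) (hj : j < q) :
    (p+q-1).choose (p+j) * ((p+j).descFactorial q) * ((p+j).descFactorial p) *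
      (j.factorial * (j+(p-q)).factorial * ((q-1)-j).factorial)
    = (p+j).factorial * (p+q-1).factorial := by
  have f1 := Nat.factorial_mul_descFactorial (show p ≤ p+j by omega)
  rw [show p + j - p = j from by omega] at f1
  have f2 := Nat.factorial_mul_descFactorial (show q ≤ p+j by omega)
  rw [show p + j - q = j + (p-q) from by omega] at f2
  have f3 := Nat.choose_mul_factorial_mul_factorial (show p+j ≤ p+q-1 from by omega)
  rw [show p+q-1-(p+j) = (q-1)-j from by omega] at f3
  calc (p+q-1).choose (p+j) * ((p+j).descFactorial q) * ((p+j).descFactorial p) *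
      (j.factorial * (j+(p-q)).factorial * ((q-1)-j).factorial)
      = (j.factorial * (p+j).descFactorial p) * ((j+(p-q)).factorial * (p+j).descFactorial q) *
        ((p+q-1).choose (p+j) * ((q-1)-j).factorial) := by ring
    _ = (p+j).factorial * (p+j).factorial * ((p+q-1).choose (p+j) * ((q-1)-j).factorial) := by
        rw [f1, f2]
    _ = (p+j).factorial * ((p+q-1).choose (p+j) * (p+j).factorial * ((q-1)-j).factorial) := by
        ring
    _ = (p+j).factorial * (p+q-1).factorial := by rw [f3]

theorem term_id2 (p q j : ℕ) (hp : 1 ≤ p) (hq : 1 ≤ q) (h : q ≤ p) (hj : j < q) (z u : ℂ) :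
    ((-1:ℂ)^p / (q * (p+q-1).factorial)) * u *
      Mfd ((((p+q-1).choose (p+j) : ℂ) * (-1)^(p+j) * ((p+j).descFactorial q : ℂ)) *
        ((p+j).descFactorial p : ℂ)) (p+j-p) (p+j-q) z
    = ((-1:ℂ)^(q+(q-1)+1) / q) * u * z^0 * ((starRingEnd ℂ) z)^(p-q) *
      ((-1:ℂ)^j * (((j+(q-1)+(p-q)+1).factorial : ℂ) /
        ((j.factorial : ℂ) * ((j+(p-q)).factorial : ℂ) * (((q-1)-j).factorial : ℂ))) *
        (z * (starRingEnd ℂ) z)^j) := by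
  have hC : ((((p+q-1).choose (p+j)) * ((p+j).descFactorial q) * ((p+j).descFactorial p) *
      (j.factorial * (j+(p-q)).factorial * ((q-1)-j).factorial) : ℕ) : ℂ)
      = (((p+j).factorial * (p+q-1).factorial : ℕ) : ℂ) := by
    exact_mod_cast congrArg (Nat.cast : ℕ → ℂ) (natkey2 p q j hp hq h hj)
  push_cast at hC
  rw [show p + j - p = j from by omega, show p + j - q = (p - q) + j from by omega,
    show q + (q-1) + 1 = q + q from by omega, show j + (q-1) + (p-q) + 1 = p + j from by omega]
  have fne : ∀ m:ℕ, ((m.factorial : ℂ)) ≠ 0 := fun m => Nat.cast_ne_zero.mpr m.factorial_ne_zero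
  have key : (((p+q-1).choose (p+j) : ℂ) * ((p+j).descFactorial q : ℂ) *
      ((p+j).descFactorial p : ℂ)) / ((p+q-1).factorial : ℂ)
      = ((p+j).factorial : ℂ) /
        ((j.factorial : ℂ) * ((j+(p-q)).factorial : ℂ) * (((q-1)-j).factorial : ℂ)) := by
    rw [div_eq_div_iff (fne _) (by exact mul_ne_zero (mul_ne_zero (fne _) (fne _)) (fne _))]
    linear_combination hC
  have hnp : ((-1:ℂ))^(p+p) = 1 := Even.neg_one_pow ⟨p, rfl⟩
  have hnq : ((-1:ℂ))^(q+q) = 1 := Even.neg_one_pow ⟨q, rfl⟩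
  rw [hnq, show ((-1:ℂ))^(p+j) = (-1)^p * (-1)^j from pow_add _ _ _]
  simp only [Mfd, pow_zero, pow_add, mul_pow]
  linear_combination
    ((-1:ℂ)^j * u * ((starRingEnd ℂ) z)^(p-q) * z^j * ((starRingEnd ℂ) z)^j / q) * key +
    ((-1:ℂ)^j * u * ((starRingEnd ℂ) z)^(p-q) * z^j * ((starRingEnd ℂ) z)^j / q *
      ((((p+q-1).choose (p+j) : ℂ) * ((p+j).descFactorial q : ℂ) *
        ((p+j).descFactorial p : ℂ)) / ((p+q-1).factorial : ℂ))) * hnp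

/-- Explicit expansion of the scattering polynomial, with m = |p-q| and ν = min{p,q} - 1. -/
theorem scatter_expansion (p q : ℕ) (hp : 1 ≤ p) (hq : 1 ≤ q) (z : ℂ) :
    scatter p q z =
      (((-1 : ℂ) ^ (q + (min p q - 1) + 1)) / q) * (1 - z * (starRingEnd ℂ) z) *
        z ^ ((max p q - min p q) + (min p q - 1) + 1 - p) *
        ((starRingEnd ℂ) z) ^ ((max p q - min p q) + (min p q - 1) + 1 - q) *
        ∑ j ∈ Finset.range ((min p q - 1) + 1),
          (-1 : ℂ) ^ j *
            ((Nat.factorial (j + (min p q - 1) + (max p q - min p q) + 1) : ℂ) /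
              ((Nat.factorial j : ℂ) * (Nat.factorial (j + (max p q - min p q)) : ℂ) *
                (Nat.factorial ((min p q - 1) - j) : ℂ))) *
            (z * (starRingEnd ℂ) z) ^ j := by
  simp only [scatter]
  rw [base_rep (p+q-1), wdzbar_iter_sum_Mfd, wdz_iter_sum_Mfd]
  simp only []
  rcases le_total p q with h | h
  · rw [min_eq_left h, max_eq_right h]
    rw [show p+q-1+1 = q+p from by omega, Finset.sum_range_add]
    have hz : (∑ i ∈ Finset.range q,
        Mfd (((p+q-1).choose i : ℂ) * (-1)^i * ((i).descFactorial q : ℂ) *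
          ((i).descFactorial p : ℂ)) (i - p) (i - q) z) = 0 := by
      refine Finset.sum_eq_zero fun i hi => ?_
      have : i.descFactorial q = 0 :=
        Nat.descFactorial_eq_zero_iff_lt.mpr (Finset.mem_range.mp hi)
      simp [Mfd, this]
    rw [hz, zero_add]
    rw [show q - p + (p-1) + 1 - p = q - p from by omega,
      show q - p + (p-1) + 1 - q = 0 from by omega, show p - 1 + 1 = p from by omega]
    rw [Finset.mul_sum, Finset.mul_sum]
    exact Finset.sum_congr rfl fun j hj =>
      term_id p q j hp hq h (Finset.mem_range.mp hj) z (1 - z * (starRingEnd ℂ) z)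
  · rw [min_eq_right h, max_eq_left h]
    rw [show p+q-1+1 = p+q from by omega, Finset.sum_range_add]
    have hz : (∑ i ∈ Finset.range p,
        Mfd (((p+q-1).choose i : ℂ) * (-1)^i * ((i).descFactorial q : ℂ) *
          ((i).descFactorial p : ℂ)) (i - p) (i - q) z) = 0 := by
      refine Finset.sum_eq_zero fun i hi => ?_
      have : i.descFactorial p = 0 :=
        Nat.descFactorial_eq_zero_iff_lt.mpr (Finset.mem_range.mp hi)
      simp [Mfd, this]
    rw [hz, zero_add]
    rw [show p - q + (q-1) + 1 - p = 0 from by omega,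
      show p - q + (q-1) + 1 - q = p - q from by omega, show q - 1 + 1 = q from by omega]
    rw [Finset.mul_sum, Finset.mul_sum]
    exact Finset.sum_congr rfl fun j hj =>
      term_id2 p q j hp hq h (Finset.mem_range.mp hj) z (1 - z * (starRingEnd ℂ) z)
end

section
/- For integers p, q ≥ 1 and z = r e^{iθ} with r ≥ 0, θ ∈ ℝ, one has φ^{(p,q)}(r e^{iθ}) = e^{i(q-p)θ} f^{(p,q)}(r), where f^{(p,q)}(r) = ((-1)^{q+ν+1}/q)(1 - r²) r^m Σ_{j=0}^{ν} (-1)^j ((j+ν+m+1)!/(j!(j+m)!(ν-j)!)) r^{2j}, with m = |p-q| and ν = min{p,q} - 1. -/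
open MeasureTheory Complex

/-- The radial function f^{(p,q)}, with m = |p-q| and ν = min{p,q} - 1. -/
noncomputable def radialF (p q : ℕ) (r : ℝ) : ℝ :=
  (((-1 : ℝ) ^ (q + (min p q - 1) + 1)) / q) * (1 - r ^ 2) * r ^ (max p q - min p q) *
    ∑ j ∈ Finset.range ((min p q - 1) + 1),
      (-1 : ℝ) ^ j *
        ((Nat.factorial (j + (min p q - 1) + (max p q - min p q) + 1) : ℝ) /
          ((Nat.factorial j : ℝ) * (Nat.factorial (j + (max p q - min p q)) : ℝ) *
            (Nat.factorial ((min p q - 1) - j) : ℝ))) * r ^ (2 * j)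

/- Auxiliary material -/

noncomputable def conjCLM : ℂ →L[ℝ] ℂ := Complex.conjCLE.toContinuousLinearMap

lemma conjCLM_apply (v : ℂ) : conjCLM v = (starRingEnd ℂ) v := rfl

lemma hasFDerivAt_mono (a b : ℕ) (z : ℂ) :
    HasFDerivAt (fun w : ℂ => w ^ a * (starRingEnd ℂ) w ^ b)
      ((((a : ℂ) * z ^ (a - 1) * (starRingEnd ℂ) z ^ b) • (ContinuousLinearMap.id ℝ ℂ))
        + (((b : ℂ) * z ^ a * (starRingEnd ℂ) z ^ (b - 1)) • conjCLM)) z := by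
  have h1 : HasFDerivAt (fun w : ℂ => w ^ a)
      ((ContinuousLinearMap.smulRight (1 : ℂ →L[ℂ] ℂ) ((a : ℂ) * z ^ (a - 1))).restrictScalars ℝ) z :=
    ((hasDerivAt_pow a z).hasFDerivAt).restrictScalars ℝ
  have hb : HasFDerivAt (fun w : ℂ => w ^ b)
      ((ContinuousLinearMap.smulRight (1 : ℂ →L[ℂ] ℂ) ((b : ℂ) * z ^ (b - 1))).restrictScalars ℝ) z :=
    ((hasDerivAt_pow b z).hasFDerivAt).restrictScalars ℝ
  have h2 : HasFDerivAt (fun w : ℂ => (starRingEnd ℂ) w ^ b)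
      (conjCLM.comp ((ContinuousLinearMap.smulRight (1 : ℂ →L[ℂ] ℂ) ((b : ℂ) * z ^ (b - 1))).restrictScalars ℝ)) z := by
    have h := (conjCLM.hasFDerivAt (x := z ^ b)).comp z hb
    have hfun : (⇑conjCLM ∘ fun w : ℂ => w ^ b) = fun w : ℂ => (starRingEnd ℂ) w ^ b :=
      funext fun w => by simp [conjCLM_apply, map_pow]
    exact hfun ▸ h
  have key := h1.mul h2
  refine key.congr_fderiv ?_
  ext v
  simp [conjCLM_apply, smul_eq_mul, map_mul, map_pow]
  ring

lemma differentiableAt_mono (a b : ℕ) (z : ℂ) :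
    DifferentiableAt ℝ (fun w : ℂ => w ^ a * (starRingEnd ℂ) w ^ b) z :=
  (hasFDerivAt_mono a b z).differentiableAt

lemma wdz_mono (a b : ℕ) (z : ℂ) :
    wdz (fun w : ℂ => w ^ a * (starRingEnd ℂ) w ^ b) z
      = (a : ℂ) * z ^ (a - 1) * (starRingEnd ℂ) z ^ b := by
  rw [wdz, (hasFDerivAt_mono a b z).fderiv]
  simp [conjCLM_apply, smul_eq_mul, Complex.conj_I]
  ring_nf
  linear_combination ((1/2 : ℂ)) * ((b : ℂ) * z ^ a * (starRingEnd ℂ) z ^ (b - 1) - (a : ℂ) * z ^ (a - 1) * (starRingEnd ℂ) z ^ b) * Complex.I_sq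

lemma wdzbar_mono (a b : ℕ) (z : ℂ) :
    wdzbar (fun w : ℂ => w ^ a * (starRingEnd ℂ) w ^ b) z
      = (b : ℂ) * z ^ a * (starRingEnd ℂ) z ^ (b - 1) := by
  rw [wdzbar, (hasFDerivAt_mono a b z).fderiv]
  simp [conjCLM_apply, smul_eq_mul, Complex.conj_I]
  ring_nf
  linear_combination ((1/2 : ℂ)) * ((a : ℂ) * z ^ (a - 1) * (starRingEnd ℂ) z ^ b - (b : ℂ) * z ^ a * (starRingEnd ℂ) z ^ (b - 1)) * Complex.I_sq

lemma wdz_const_mul {f : ℂ → ℂ} {z : ℂ} (h : DifferentiableAt ℝ f z) (c : ℂ) :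
    wdz (fun w => c * f w) z = c * wdz f z := by
  rw [wdz, wdz, fderiv_const_mul h c]
  simp [smul_eq_mul]
  ring

lemma wdzbar_const_mul {f : ℂ → ℂ} {z : ℂ} (h : DifferentiableAt ℝ f z) (c : ℂ) :
    wdzbar (fun w => c * f w) z = c * wdzbar f z := by
  rw [wdzbar, wdzbar, fderiv_const_mul h c]
  simp [smul_eq_mul]
  ring

lemma wdz_sum {ι : Type*} (s : Finset ι) (f : ι → ℂ → ℂ) (z : ℂ)
    (h : ∀ i ∈ s, DifferentiableAt ℝ (f i) z) :
    wdz (fun w => ∑ i ∈ s, f i w) z = ∑ i ∈ s, wdz (f i) z := by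
  rw [wdz, fderiv_fun_sum h]
  simp only [ContinuousLinearMap.coe_sum', Finset.sum_apply, Finset.mul_sum, wdz,
    ← Finset.sum_sub_distrib, Finset.sum_div]

lemma wdzbar_sum {ι : Type*} (s : Finset ι) (f : ι → ℂ → ℂ) (z : ℂ)
    (h : ∀ i ∈ s, DifferentiableAt ℝ (f i) z) :
    wdzbar (fun w => ∑ i ∈ s, f i w) z = ∑ i ∈ s, wdzbar (f i) z := by
  rw [wdzbar, fderiv_fun_sum h]
  simp only [ContinuousLinearMap.coe_sum', Finset.sum_apply, Finset.mul_sum, wdzbar,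
    ← Finset.sum_add_distrib, Finset.sum_div]

noncomputable def Gfun (n p q : ℕ) : ℂ → ℂ := fun w =>
  ∑ k ∈ Finset.range (n + 1),
    ((n.choose k : ℂ) * (-1) ^ k * (k.descFactorial p : ℂ) * (k.descFactorial q : ℂ)) *
      (w ^ (k - p) * (starRingEnd ℂ) w ^ (k - q))

lemma Gfun_zero_zero (n : ℕ) :
    Gfun n 0 0 = fun w => (1 - w * (starRingEnd ℂ) w) ^ n := by
  funext w
  have h : (1 : ℂ) - w * (starRingEnd ℂ) w = (-(w * (starRingEnd ℂ) w)) + 1 := by ring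
  rw [Gfun, h, add_pow]
  refine Finset.sum_congr rfl fun k hk => ?_
  simp only [Nat.descFactorial_zero, Nat.cast_one, Nat.sub_zero, one_pow, mul_one]
  rw [show (-(w * (starRingEnd ℂ) w)) = (-1) * (w * (starRingEnd ℂ) w) by ring, mul_pow, mul_pow]
  ring

lemma wdzbar_Gfun (n q : ℕ) : wdzbar (Gfun n 0 q) = Gfun n 0 (q + 1) := by
  funext z
  rw [show Gfun n 0 q = fun w => ∑ k ∈ Finset.range (n + 1),
    ((n.choose k : ℂ) * (-1) ^ k * (k.descFactorial 0 : ℂ) * (k.descFactorial q : ℂ)) *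
      (w ^ (k - 0) * (starRingEnd ℂ) w ^ (k - q)) from rfl]
  rw [wdzbar_sum _ _ z (fun k _ => (differentiableAt_mono (k - 0) (k - q) z).const_mul _)]
  refine Finset.sum_congr rfl fun k hk => ?_
  rw [wdzbar_const_mul (differentiableAt_mono (k - 0) (k - q) z) _, wdzbar_mono]
  rw [Nat.descFactorial_succ]
  push_cast
  rw [Nat.sub_sub]
  ring

lemma wdz_Gfun (n p q : ℕ) : wdz (Gfun n p q) = Gfun n (p + 1) q := by
  funext z
  rw [show Gfun n p q = fun w => ∑ k ∈ Finset.range (n + 1),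
    ((n.choose k : ℂ) * (-1) ^ k * (k.descFactorial p : ℂ) * (k.descFactorial q : ℂ)) *
      (w ^ (k - p) * (starRingEnd ℂ) w ^ (k - q)) from rfl]
  rw [wdz_sum _ _ z (fun k _ => (differentiableAt_mono (k - p) (k - q) z).const_mul _)]
  refine Finset.sum_congr rfl fun k hk => ?_
  rw [wdz_const_mul (differentiableAt_mono (k - p) (k - q) z) _, wdz_mono]
  rw [Nat.descFactorial_succ (k := p)]
  push_cast
  rw [Nat.sub_sub]
  ring

lemma iter_wdzbar (n q : ℕ) : wdzbar^[q] (Gfun n 0 0) = Gfun n 0 q := by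
  induction q with
  | zero => rfl
  | succ q ih => rw [Function.iterate_succ_apply', ih, wdzbar_Gfun]

lemma iter_wdz (n p q : ℕ) : wdz^[p] (Gfun n 0 q) = Gfun n p q := by
  induction p with
  | zero => rfl
  | succ p ih => rw [Function.iterate_succ_apply', ih, wdz_Gfun]

lemma radialF_cast (p q : ℕ) (r : ℝ) :
    ((radialF p q r : ℝ) : ℂ) =
      (((-1 : ℂ) ^ (q + (min p q - 1) + 1)) / q) * (1 - (r : ℂ) ^ 2) *
        (r : ℂ) ^ (max p q - min p q) *
        ∑ j ∈ Finset.range ((min p q - 1) + 1),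
          (-1 : ℂ) ^ j *
            ((Nat.factorial (j + (min p q - 1) + (max p q - min p q) + 1) : ℂ) /
              ((Nat.factorial j : ℂ) * (Nat.factorial (j + (max p q - min p q)) : ℂ) *
                (Nat.factorial ((min p q - 1) - j) : ℂ))) * (r : ℂ) ^ (2 * j) := by
  rw [radialF]
  push_cast
  rfl

/-- Polar factorization: φ^{(p,q)}(r e^{iθ}) = e^{i(q-p)θ} f^{(p,q)}(r). -/
theorem scatter_polar (p q : ℕ) (hp : 1 ≤ p) (hq : 1 ≤ q) (r θ : ℝ) (hr : 0 ≤ r) :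
    scatter p q ((r : ℂ) * Complex.exp (θ * Complex.I)) =
      Complex.exp (((q : ℂ) - (p : ℂ)) * θ * Complex.I) * (radialF p q r : ℂ) := by
  have key : wdz^[p] (wdzbar^[q] (fun w => (1 - w * (starRingEnd ℂ) w) ^ (p + q - 1)))
      = Gfun (p + q - 1) p q := by
    rw [← Gfun_zero_zero, iter_wdzbar, iter_wdz]
  rw [scatter, key, radialF_cast]
  set M := max p q with hMdef
  set ν := min p q - 1 with hνdef
  set m := M - min p q with hmdef
  have hn : p + q - 1 = M + ν := by omega
  set z := (r : ℂ) * Complex.exp (θ * Complex.I) with hz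
  have hzbar : (starRingEnd ℂ) z = (r : ℂ) * Complex.exp (-(θ * Complex.I)) := by
    rw [hz, map_mul, ← Complex.exp_conj]
    congr 1
    · exact Complex.conj_ofReal r
    · congr 1
      simp [map_mul, Complex.conj_ofReal, Complex.conj_I]
  have hzz : z * (starRingEnd ℂ) z = (r : ℂ) ^ 2 := by
    rw [hzbar, hz]
    calc (r:ℂ) * Complex.exp (θ * Complex.I) * ((r:ℂ) * Complex.exp (-(θ * Complex.I)))
        = (r:ℂ)^2 * (Complex.exp (θ * Complex.I) * Complex.exp (-(θ * Complex.I))) := by ring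
      _ = (r:ℂ)^2 := by rw [← Complex.exp_add, add_neg_cancel, Complex.exp_zero, mul_one]
  rw [hzz]
  have hexp : ∀ j ∈ Finset.range (ν + 1),
      z ^ (M + j - p) * (starRingEnd ℂ) z ^ (M + j - q)
        = Complex.exp (((q : ℂ) - (p : ℂ)) * θ * Complex.I) * (r : ℂ) ^ (2 * j + m) := by
    intro j _
    have hE : Complex.exp (θ * Complex.I) ^ (M + j - p) *
        Complex.exp (-(θ * Complex.I)) ^ (M + j - q)
          = Complex.exp (((q : ℂ) - (p : ℂ)) * θ * Complex.I) := by
      rw [← Complex.exp_nat_mul, ← Complex.exp_nat_mul, ← Complex.exp_add]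
      congr 1
      rw [Nat.cast_sub (show p ≤ M + j by omega), Nat.cast_sub (show q ≤ M + j by omega)]
      push_cast
      ring
    have hR : (r : ℂ) ^ (M + j - p) * (r : ℂ) ^ (M + j - q) = (r : ℂ) ^ (2 * j + m) := by
      rw [← pow_add]
      congr 1
      omega
    calc z ^ (M + j - p) * (starRingEnd ℂ) z ^ (M + j - q)
        = ((r:ℂ) ^ (M + j - p) * (r:ℂ) ^ (M + j - q)) *
            (Complex.exp (θ * Complex.I) ^ (M + j - p) *
              Complex.exp (-(θ * Complex.I)) ^ (M + j - q)) := by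
          rw [hz, hzbar, mul_pow, mul_pow]; ring
      _ = _ := by rw [hE, hR]; ring
  have hG : Gfun (p + q - 1) p q z
      = Complex.exp (((q : ℂ) - (p : ℂ)) * θ * Complex.I) *
        ∑ j ∈ Finset.range (ν + 1),
          (((M + ν).choose (M + j) : ℂ) * (-1) ^ (M + j) *
            ((M + j).descFactorial p : ℂ) * ((M + j).descFactorial q : ℂ)) *
            (r : ℂ) ^ (2 * j + m) := by
    rw [show Gfun (p+q-1) p q z = ∑ k ∈ Finset.range (p + q - 1 + 1),
      (((p+q-1).choose k : ℂ) * (-1) ^ k * (k.descFactorial p : ℂ) * (k.descFactorial q : ℂ)) *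
        (z ^ (k - p) * (starRingEnd ℂ) z ^ (k - q)) from rfl]
    rw [hn, show M + ν + 1 = M + (ν + 1) by omega, Finset.sum_range_add]
    have hzero : ∑ k ∈ Finset.range M,
        (((M + ν).choose k : ℂ) * (-1) ^ k * (k.descFactorial p : ℂ) * (k.descFactorial q : ℂ)) *
          (z ^ (k - p) * (starRingEnd ℂ) z ^ (k - q)) = 0 := by
      refine Finset.sum_eq_zero fun k hk => ?_
      have hkM : k < M := Finset.mem_range.1 hk
      have hor : k < p ∨ k < q := by omega
      rcases hor with h | h
      · rw [Nat.descFactorial_eq_zero_iff_lt.2 h]; push_cast; ring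
      · rw [Nat.descFactorial_eq_zero_iff_lt.2 h]; push_cast; ring
    rw [hzero, zero_add, Finset.mul_sum]
    exact Finset.sum_congr rfl fun j hj => by rw [hexp j hj]; ring
  rw [hG]
  have hq0 : (q : ℂ) ≠ 0 := Nat.cast_ne_zero.2 (by omega)
  have hsum : ∑ j ∈ Finset.range (ν + 1),
      ((-1 : ℂ) ^ p / (q * Nat.factorial (p + q - 1))) *
        ((((M + ν).choose (M + j) : ℂ) * (-1) ^ (M + j) *
          ((M + j).descFactorial p : ℂ) * ((M + j).descFactorial q : ℂ)) *
          (r : ℂ) ^ (2 * j + m))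
      = ∑ j ∈ Finset.range (ν + 1),
        ((((-1 : ℂ) ^ (q + ν + 1)) / q) * (r : ℂ) ^ m) *
          ((-1 : ℂ) ^ j *
            ((Nat.factorial (j + ν + m + 1) : ℂ) /
              ((Nat.factorial j : ℂ) * (Nat.factorial (j + m) : ℂ) *
                (Nat.factorial (ν - j) : ℂ))) * (r : ℂ) ^ (2 * j)) := by
    refine Finset.sum_congr rfl fun j hj => ?_
    have hjν : j ≤ ν := by have := Finset.mem_range.1 hj; omega
    have hMj : j + ν + m + 1 = M + j := by omega
    have hF0 : ((Nat.factorial (p + q - 1) : ℕ) : ℂ) ≠ 0 :=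
      Nat.cast_ne_zero.2 (Nat.factorial_ne_zero _)
    have hj0 : ((Nat.factorial j : ℕ) : ℂ) ≠ 0 := Nat.cast_ne_zero.2 (Nat.factorial_ne_zero _)
    have hjm0 : ((Nat.factorial (j + m) : ℕ) : ℂ) ≠ 0 := Nat.cast_ne_zero.2 (Nat.factorial_ne_zero _)
    have hνj0 : ((Nat.factorial (ν - j) : ℕ) : ℂ) ≠ 0 := Nat.cast_ne_zero.2 (Nat.factorial_ne_zero _)
    have hden0 : ((Nat.factorial j : ℕ) : ℂ) * ((Nat.factorial (j + m) : ℕ) : ℂ) *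
        ((Nat.factorial (ν - j) : ℕ) : ℂ) ≠ 0 := mul_ne_zero (mul_ne_zero hj0 hjm0) hνj0
    -- factorial identities
    have A1 : (((M + ν).choose (M + j) : ℕ) : ℂ) * ((Nat.factorial (M + j) : ℕ) : ℂ) *
        ((Nat.factorial (ν - j) : ℕ) : ℂ) = ((Nat.factorial (p + q - 1) : ℕ) : ℂ) := by
      have h := Nat.choose_mul_factorial_mul_factorial (show M + j ≤ M + ν by omega)
      rw [show M + ν - (M + j) = ν - j by omega] at h
      rw [hn]
      exact_mod_cast h
    have A2 : ((Nat.factorial (M + j - p) : ℕ) : ℂ) * (((M + j).descFactorial p : ℕ) : ℂ)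
        = ((Nat.factorial (M + j) : ℕ) : ℂ) := by
      exact_mod_cast congrArg (Nat.cast (R := ℂ))
        (Nat.factorial_mul_descFactorial (show p ≤ M + j by omega))
    have A3 : ((Nat.factorial (M + j - q) : ℕ) : ℂ) * (((M + j).descFactorial q : ℕ) : ℂ)
        = ((Nat.factorial (M + j) : ℕ) : ℂ) := by
      exact_mod_cast congrArg (Nat.cast (R := ℂ))
        (Nat.factorial_mul_descFactorial (show q ≤ M + j by omega))
    have hset : ((Nat.factorial (M + j - p) : ℕ) : ℂ) * ((Nat.factorial (M + j - q) : ℕ) : ℂ)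
        = ((Nat.factorial j : ℕ) : ℂ) * ((Nat.factorial (j + m) : ℕ) : ℂ) := by
      rcases le_total p q with h | h
      · rw [show M + j - p = j + m by omega, show M + j - q = j by omega]; ring
      · rw [show M + j - p = j by omega, show M + j - q = j + m by omega]
    have hfrac : (((M + ν).choose (M + j) : ℕ) : ℂ) * (((M + j).descFactorial p : ℕ) : ℂ) *
          (((M + j).descFactorial q : ℕ) : ℂ) / ((Nat.factorial (p + q - 1) : ℕ) : ℂ)
        = ((Nat.factorial (M + j) : ℕ) : ℂ) /
            (((Nat.factorial j : ℕ) : ℂ) * ((Nat.factorial (j + m) : ℕ) : ℂ) *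
              ((Nat.factorial (ν - j) : ℕ) : ℂ)) := by
      rw [div_eq_div_iff hF0 hden0]
      linear_combination
        (-((((M + ν).choose (M + j) : ℕ) : ℂ) * (((M + j).descFactorial p : ℕ) : ℂ) *
          (((M + j).descFactorial q : ℕ) : ℂ) * ((Nat.factorial (ν - j) : ℕ) : ℂ))) * hset
        + ((((M + ν).choose (M + j) : ℕ) : ℂ) * (((M + j).descFactorial q : ℕ) : ℂ) *
          ((Nat.factorial (ν - j) : ℕ) : ℂ) * ((Nat.factorial (M + j - q) : ℕ) : ℂ)) * A2
        + ((((M + ν).choose (M + j) : ℕ) : ℂ) * ((Nat.factorial (ν - j) : ℕ) : ℂ) *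
          ((Nat.factorial (M + j) : ℕ) : ℂ)) * A3
        + ((Nat.factorial (M + j) : ℕ) : ℂ) * A1
    have hsign : (-1 : ℂ) ^ p * (-1 : ℂ) ^ (M + j) = (-1 : ℂ) ^ (q + ν + 1) * (-1 : ℂ) ^ j := by
      have hmod : (p + (M + j)) % 2 = (q + ν + 1 + j) % 2 := by omega
      rw [← pow_add, ← pow_add, neg_one_pow_eq_pow_mod_two, hmod, ← neg_one_pow_eq_pow_mod_two]
    rw [hMj]
    linear_combination
      ((r:ℂ) ^ (2 * j) * (r:ℂ) ^ m / (q : ℂ)) *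
        ((((M + ν).choose (M + j) : ℕ) : ℂ) * (((M + j).descFactorial p : ℕ) : ℂ) *
          (((M + j).descFactorial q : ℕ) : ℂ) / ((Nat.factorial (p + q - 1) : ℕ) : ℂ)) * hsign
      + ((r:ℂ) ^ (2 * j) * (r:ℂ) ^ m / (q : ℂ)) *
        ((-1 : ℂ) ^ (q + ν + 1) * (-1 : ℂ) ^ j) * hfrac
  rw [show ((-1 : ℂ) ^ p / (q * Nat.factorial (p + q - 1))) * (1 - (r:ℂ) ^ 2) *
      (Complex.exp (((q : ℂ) - (p : ℂ)) * θ * Complex.I) *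
        ∑ j ∈ Finset.range (ν + 1),
          (((M + ν).choose (M + j) : ℂ) * (-1) ^ (M + j) *
            ((M + j).descFactorial p : ℂ) * ((M + j).descFactorial q : ℂ)) *
            (r : ℂ) ^ (2 * j + m))
    = (1 - (r:ℂ) ^ 2) * Complex.exp (((q : ℂ) - (p : ℂ)) * θ * Complex.I) *
      (((-1 : ℂ) ^ p / (q * Nat.factorial (p + q - 1))) *
        ∑ j ∈ Finset.range (ν + 1),
          (((M + ν).choose (M + j) : ℂ) * (-1) ^ (M + j) *
            ((M + j).descFactorial p : ℂ) * ((M + j).descFactorial q : ℂ)) *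
            (r : ℂ) ^ (2 * j + m)) from by ring]
  rw [Finset.mul_sum, hsum, ← Finset.mul_sum]
  ring
end

section
/- Every scattering polynomial φ^{(p,q)} (p, q ≥ 1) lies in L²(D, dxdy/(1-x²-y²)): the integral ∫_D |φ^{(p,q)}|² (1-x²-y²)^{-1} dxdy is finite. -/
open MeasureTheory Complex

/-- The open unit disk in ℂ. -/
def unitDisk : Set ℂ := {z : ℂ | ‖z‖ < 1}

/-- The measure dxdy/(1-x²-y²) on the unit disk. -/
noncomputable def diskMeasure : Measure ℂ :=
  (volume.restrict unitDisk).withDensity fun z => ENNReal.ofReal (1 - Complex.normSq z)⁻¹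

open ENNReal

lemma wdz_contDiff {f : ℂ → ℂ} (hf : ContDiff ℝ ⊤ f) : ContDiff ℝ ⊤ (wdz f) := by
  have h1 : ContDiff ℝ ⊤ (fderiv ℝ f) := hf.fderiv_right le_top
  exact ((h1.clm_apply contDiff_const).sub
    (contDiff_const.mul (h1.clm_apply contDiff_const))).div_const 2

lemma wdzbar_contDiff {f : ℂ → ℂ} (hf : ContDiff ℝ ⊤ f) : ContDiff ℝ ⊤ (wdzbar f) := by
  have h1 : ContDiff ℝ ⊤ (fderiv ℝ f) := hf.fderiv_right le_top
  exact ((h1.clm_apply contDiff_const).add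
    (contDiff_const.mul (h1.clm_apply contDiff_const))).div_const 2

lemma iter_contDiff {f : ℂ → ℂ} (hf : ContDiff ℝ ⊤ f) (p q : ℕ) :
    ContDiff ℝ ⊤ (wdz^[p] (wdzbar^[q] f)) := by
  induction p with
  | zero =>
    simp only [Function.iterate_zero, id]
    induction q with
    | zero => simpa using hf
    | succ n ih => rw [Function.iterate_succ_apply']; exact wdzbar_contDiff ih
  | succ n ih => rw [Function.iterate_succ_apply']; exact wdz_contDiff ih

lemma base_contDiff (n : ℕ) : ContDiff ℝ ⊤ (fun w : ℂ => (1 - w * (starRingEnd ℂ) w) ^ n) :=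
  (contDiff_const.sub (contDiff_id.mul Complex.conjCLE.contDiff)).pow n

lemma scatter_contDiff (p q : ℕ) : ContDiff ℝ ⊤ (scatter p q) := by
  unfold scatter
  exact (contDiff_const.mul
    (contDiff_const.sub (contDiff_id.mul Complex.conjCLE.contDiff))).mul
    (iter_contDiff (base_contDiff _) p q)

lemma unitDisk_measurable : MeasurableSet unitDisk :=
  (isOpen_lt continuous_norm continuous_const).measurableSet

lemma normSq_lt_one {z : ℂ} (hz : z ∈ unitDisk) : Complex.normSq z < 1 := by
  have habs : ‖z‖ < 1 := hz
  rw [← Complex.sq_norm]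
  nlinarith [norm_nonneg z]


/-- Every scattering polynomial is square integrable with respect to dxdy/(1-x²-y²) on D. -/
theorem scatter_memL2 (p q : ℕ) (hp : 1 ≤ p) (hq : 1 ≤ q) :
    MemLp (scatter p q) 2 diskMeasure := by
  set F := wdz^[p] (wdzbar^[q] (fun w : ℂ => (1 - w * (starRingEnd ℂ) w) ^ (p + q - 1))) with hF
  obtain ⟨C, hC⟩ := (isCompact_closedBall (0:ℂ) 1).exists_bound_of_continuousOn
    (iter_contDiff (base_contDiff (p + q - 1)) p q).continuous.continuousOn
  have hC0 : 0 ≤ C := le_trans (norm_nonneg _) (hC 0 (by simp))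
  set c : ℝ := ‖((-1 : ℂ) ^ p / ((q : ℂ) * Nat.factorial (p + q - 1)))‖ with hc
  have hc0 : 0 ≤ c := norm_nonneg _
  have hcont : Continuous (scatter p q) := (scatter_contDiff p q).continuous
  have key : ∀ z ∈ unitDisk, ‖scatter p q z‖ ≤ c * C * (1 - Complex.normSq z) := by
    intro z hz
    have hns : Complex.normSq z < 1 := normSq_lt_one hz
    have h1 : (1 : ℂ) - z * (starRingEnd ℂ) z = ((1 - Complex.normSq z : ℝ) : ℂ) := by
      rw [Complex.mul_conj]; push_cast; ring
    have hFz : ‖F z‖ ≤ C := hC z (by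
      simp only [Metric.mem_closedBall, dist_zero_right]
      exact le_of_lt hz)
    have heq : ‖scatter p q z‖ = c * (1 - Complex.normSq z) * ‖F z‖ := by
      rw [show scatter p q z = ((-1 : ℂ) ^ p / ((q : ℂ) * Nat.factorial (p + q - 1))) *
          ((1 : ℂ) - z * (starRingEnd ℂ) z) * F z from rfl, norm_mul, norm_mul, h1,
        Complex.norm_real, Real.norm_eq_abs, _root_.abs_of_nonneg (by linarith)]
    rw [heq]
    nlinarith [mul_le_mul_of_nonneg_left hFz (mul_nonneg hc0 (by linarith :
      (0:ℝ) ≤ 1 - Complex.normSq z)), norm_nonneg (F z)]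
  constructor
  · exact hcont.aestronglyMeasurable
  · rw [eLpNorm_eq_lintegral_rpow_enorm_toReal (by norm_num) (by norm_num)]
    refine ENNReal.rpow_lt_top_of_nonneg (by norm_num) ?_
    have hmeas : Measurable fun z : ℂ => ENNReal.ofReal (1 - Complex.normSq z)⁻¹ :=
      ((continuous_const.sub Complex.continuous_normSq).measurable.inv).ennreal_ofReal
    rw [show diskMeasure = (volume.restrict unitDisk).withDensity
        (fun z => ENNReal.ofReal (1 - Complex.normSq z)⁻¹) from rfl,
      lintegral_withDensity_eq_lintegral_mul _ hmeas
        ((hcont.measurable.enorm).pow_const _)]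
    simp only [Pi.mul_apply]
    refine ne_of_lt ?_
    have hbound : ∀ᵐ z ∂(volume.restrict unitDisk),
        (ENNReal.ofReal (1 - Complex.normSq z)⁻¹ *
          (‖scatter p q z‖₊ : ℝ≥0∞) ^ (2 : ℝ≥0∞).toReal)
        ≤ ENNReal.ofReal ((c * C) ^ 2) := by
      rw [ae_restrict_iff' unitDisk_measurable]
      refine ae_of_all _ fun z hz => ?_
      have hns : Complex.normSq z < 1 := normSq_lt_one hz
      set t : ℝ := 1 - Complex.normSq z with ht
      have ht0 : 0 < t := by simp only [ht]; linarith
      have ht1 : t ≤ 1 := by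
        simp only [ht]
        nlinarith [Complex.normSq_nonneg z]
      have hsz : ‖scatter p q z‖ ≤ c * C * t := key z hz
      have h2 : ((‖scatter p q z‖₊ : ℝ≥0∞)) ^ (2 : ℝ≥0∞).toReal
          = ENNReal.ofReal (‖scatter p q z‖ ^ 2) := by
        rw [ENNReal.toReal_ofNat, ← ENNReal.ofReal_coe_nnreal, coe_nnnorm,
          ENNReal.ofReal_rpow_of_nonneg (norm_nonneg _) (by norm_num)]
        norm_num [Real.rpow_natCast]
      rw [h2, ← ENNReal.ofReal_mul (by positivity)]
      refine ENNReal.ofReal_le_ofReal ?_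
      have hsq : ‖scatter p q z‖ ^ 2 ≤ (c * C) ^ 2 * t ^ 2 := by
        nlinarith [norm_nonneg (scatter p q z)]
      calc t⁻¹ * ‖scatter p q z‖ ^ 2 ≤ t⁻¹ * ((c * C) ^ 2 * t ^ 2) :=
            mul_le_mul_of_nonneg_left hsq (by positivity)
        _ = (c * C) ^ 2 * t := by field_simp
        _ ≤ (c * C) ^ 2 := by nlinarith [sq_nonneg (c * C)]
    calc ∫⁻ z, ENNReal.ofReal (1 - Complex.normSq z)⁻¹ *
            (‖scatter p q z‖₊ : ℝ≥0∞) ^ (2 : ℝ≥0∞).toReal ∂(volume.restrict unitDisk)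
        ≤ ∫⁻ _, ENNReal.ofReal ((c * C) ^ 2) ∂(volume.restrict unitDisk) :=
          lintegral_mono_ae hbound
      _ = ENNReal.ofReal ((c * C) ^ 2) * volume unitDisk := by
          rw [lintegral_const, Measure.restrict_apply_univ]
      _ < ⊤ := by
          refine ENNReal.mul_lt_top ENNReal.ofReal_lt_top ?_
          have hsub : unitDisk ⊆ Metric.ball (0:ℂ) 1 := fun z hz => by
            rw [Metric.mem_ball, dist_zero_right]; exact hz
          exact (measure_mono hsub).trans_lt measure_ball_lt_top
end

section
/- The linear span of the scattering polynomials {φ^{(p,q)} : p, q ≥ 1} is dense in L²(D, dxdy) (with ordinary Lebesgue measure), so scattering polynomials form a (not necessarily orthogonal) complete system in L²(D, dxdy) all of whose members vanish on the boundary circle. -/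
open MeasureTheory Complex
open scoped ENNReal NNReal

namespace ScatterAux

/-- monomial z^a z̄^b -/
noncomputable def mono (a b : ℕ) : ℂ → ℂ := fun z => z ^ a * ((starRingEnd ℂ) z) ^ b

noncomputable def conjCLM : ℂ →L[ℝ] ℂ := Complex.conjCLE.toContinuousLinearMap

@[simp] lemma conjCLM_apply (v : ℂ) : conjCLM v = (starRingEnd ℂ) v := rfl

/-- the real-linear map v ↦ α v + β conj v -/
noncomputable def D (α β : ℂ) : ℂ →L[ℝ] ℂ :=
  α • (ContinuousLinearMap.id ℝ ℂ) + β • conjCLM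

@[simp] lemma D_apply (α β v : ℂ) : D α β v = α * v + β * (starRingEnd ℂ) v := by
  simp [D, ContinuousLinearMap.smul_apply]

lemma hasFDerivAt_mono (a b : ℕ) (z : ℂ) :
    HasFDerivAt (mono a b)
      (D ((a : ℂ) * z ^ (a - 1) * ((starRingEnd ℂ) z) ^ b)
         ((b : ℂ) * z ^ a * ((starRingEnd ℂ) z) ^ (b - 1))) z := by
  have h1 : HasFDerivAt (fun z : ℂ => z ^ a)
      (((ContinuousLinearMap.smulRight (1 : ℂ →L[ℂ] ℂ) ((a : ℂ) * z ^ (a - 1)))).restrictScalars ℝ) z :=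
    (hasDerivAt_pow a z).hasFDerivAt.restrictScalars ℝ
  have hconj : HasFDerivAt (fun z : ℂ => (starRingEnd ℂ) z) conjCLM z :=
    Complex.conjCLE.hasFDerivAt
  have h2' : HasFDerivAt (fun w : ℂ => w ^ b)
      (((ContinuousLinearMap.smulRight (1 : ℂ →L[ℂ] ℂ) ((b : ℂ) * ((starRingEnd ℂ) z) ^ (b - 1)))).restrictScalars ℝ)
      ((starRingEnd ℂ) z) :=
    (hasDerivAt_pow b _).hasFDerivAt.restrictScalars ℝ
  have h2 := h2'.comp z hconj
  have := h1.mul h2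
  refine this.congr_fderiv ?_
  ext v
  simp [D, ContinuousLinearMap.smul_apply, mono]
  ring

lemma wdz_eq {f : ℂ → ℂ} {f' : ℂ →L[ℝ] ℂ} {z : ℂ} (h : HasFDerivAt f f' z) :
    wdz f z = (f' 1 - Complex.I * f' Complex.I) / 2 := by
  rw [wdz, h.fderiv]

lemma wdzbar_eq {f : ℂ → ℂ} {f' : ℂ →L[ℝ] ℂ} {z : ℂ} (h : HasFDerivAt f f' z) :
    wdzbar f z = (f' 1 + Complex.I * f' Complex.I) / 2 := by
  rw [wdzbar, h.fderiv]

/-- finite sums of monomials -/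
noncomputable def SM (s : Finset ℕ) (c : ℕ → ℂ) (A B : ℕ → ℕ) : ℂ → ℂ :=
  fun z => ∑ j ∈ s, c j * mono (A j) (B j) z

lemma hasFDerivAt_SM (s : Finset ℕ) (c : ℕ → ℂ) (A B : ℕ → ℕ) (z : ℂ) :
    HasFDerivAt (SM s c A B)
      (∑ j ∈ s, c j • D ((A j : ℂ) * z ^ (A j - 1) * ((starRingEnd ℂ) z) ^ (B j))
          ((B j : ℂ) * z ^ (A j) * ((starRingEnd ℂ) z) ^ (B j - 1))) z := by
  refine HasFDerivAt.fun_sum fun j _ => ?_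
  exact (hasFDerivAt_mono (A j) (B j) z).const_mul (c j)

lemma wdz_SM (s : Finset ℕ) (c : ℕ → ℂ) (A B : ℕ → ℕ) :
    wdz (SM s c A B) = SM s (fun j => c j * (A j : ℂ)) (fun j => A j - 1) B := by
  funext z
  rw [wdz_eq (hasFDerivAt_SM s c A B z)]
  simp only [ContinuousLinearMap.coe_sum', Finset.sum_apply, ContinuousLinearMap.coe_smul',
    Pi.smul_apply, D_apply, map_one, Complex.conj_I, SM, mono]
  rw [Finset.mul_sum, ← Finset.sum_sub_distrib, Finset.sum_div]
  refine Finset.sum_congr rfl fun j _ => ?_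
  simp only [smul_eq_mul]
  ring_nf
  simp only [Complex.I_sq]
  ring

lemma wdzbar_SM (s : Finset ℕ) (c : ℕ → ℂ) (A B : ℕ → ℕ) :
    wdzbar (SM s c A B) = SM s (fun j => c j * (B j : ℂ)) A (fun j => B j - 1) := by
  funext z
  rw [wdzbar_eq (hasFDerivAt_SM s c A B z)]
  simp only [ContinuousLinearMap.coe_sum', Finset.sum_apply, ContinuousLinearMap.coe_smul',
    Pi.smul_apply, D_apply, map_one, Complex.conj_I, SM, mono]
  rw [Finset.mul_sum, ← Finset.sum_add_distrib, Finset.sum_div]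
  refine Finset.sum_congr rfl fun j _ => ?_
  simp only [smul_eq_mul]
  ring_nf
  simp only [Complex.I_sq]
  ring

lemma SM_congr (s : Finset ℕ) {c c' : ℕ → ℂ} {A A' B B' : ℕ → ℕ}
    (hc : ∀ j ∈ s, c j = c' j) (hA : ∀ j ∈ s, A j = A' j) (hB : ∀ j ∈ s, B j = B' j) :
    SM s c A B = SM s c' A' B' := by
  funext z
  exact Finset.sum_congr rfl fun j hj => by rw [hc j hj, hA j hj, hB j hj]

lemma wdzbar_iter_SM (q : ℕ) (s : Finset ℕ) (c : ℕ → ℂ) (A B : ℕ → ℕ) :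
    wdzbar^[q] (SM s c A B)
      = SM s (fun j => c j * ((B j).descFactorial q : ℂ)) A (fun j => B j - q) := by
  induction q with
  | zero => simp [SM_congr]
  | succ n ih =>
    rw [Function.iterate_succ_apply', ih, wdzbar_SM]
    refine SM_congr s (fun j _ => ?_) (fun j _ => rfl) (fun j _ => ?_)
    · rw [Nat.descFactorial_succ]
      push_cast
      ring
    · omega

lemma wdz_iter_SM (p : ℕ) (s : Finset ℕ) (c : ℕ → ℂ) (A B : ℕ → ℕ) :
    wdz^[p] (SM s c A B)
      = SM s (fun j => c j * ((A j).descFactorial p : ℂ)) (fun j => A j - p) B := by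
  induction p with
  | zero => simp [SM_congr]
  | succ n ih =>
    rw [Function.iterate_succ_apply', ih, wdz_SM]
    refine SM_congr s (fun j _ => ?_) (fun j _ => ?_) (fun j _ => rfl)
    · rw [Nat.descFactorial_succ]
      push_cast
      ring
    · omega


-- new part:

lemma base_eq (m : ℕ) :
    (fun w : ℂ => (1 - w * (starRingEnd ℂ) w) ^ m)
      = SM (Finset.range (m+1)) (fun j => (m.choose j : ℂ) * (-1)^j) id id := by
  funext z
  have : (1 : ℂ) - z * (starRingEnd ℂ) z = (-(z * (starRingEnd ℂ) z)) + 1 := by ring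
  rw [this, add_pow]
  refine Finset.sum_congr rfl fun j hj => ?_
  simp only [SM, mono, id, one_pow, mul_one]
  rw [neg_pow, mul_pow]
  ring

/-- coefficient in the explicit expansion of `scatter` -/
noncomputable def scoef (p q j : ℕ) : ℂ :=
  ((-1 : ℂ) ^ p / (q * Nat.factorial (p + q - 1))) * ((p+q-1).choose j) * (-1)^j *
    (j.descFactorial q) * (j.descFactorial p)

/-- (1-|z|²) times monomial -/
noncomputable def gfun (a b : ℕ) : ℂ → ℂ := fun z => (1 - z * (starRingEnd ℂ) z) * mono a b z

lemma scatter_eq (p q : ℕ) (hp : 1 ≤ p) (hq : 1 ≤ q) :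
    scatter p q = fun z => ∑ j ∈ Finset.range (p+q), scoef p q j * gfun (j-p) (j-q) z := by
  funext z
  unfold scatter
  rw [base_eq, wdzbar_iter_SM, wdz_iter_SM]
  have hr : p + q - 1 + 1 = p + q := by omega
  rw [hr]
  simp only [SM, gfun, scoef, id]
  rw [Finset.mul_sum]
  refine Finset.sum_congr rfl fun j hj => ?_
  ring

lemma continuous_conj' : Continuous fun z : ℂ => (starRingEnd ℂ) z := by
  simp only [starRingEnd_apply]
  exact continuous_star

lemma continuous_mono (a b : ℕ) : Continuous (mono a b) :=
  (continuous_pow a).mul (continuous_conj'.pow b)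

lemma continuous_gfun (a b : ℕ) : Continuous (gfun a b) :=
  ((continuous_const.sub (continuous_id.mul continuous_conj')).mul (continuous_mono a b))

lemma measurableSet_unitDisk : MeasurableSet unitDisk := by
  have : IsOpen unitDisk := isOpen_lt continuous_norm continuous_const
  exact this.measurableSet

lemma unitDisk_subset : unitDisk ⊆ Metric.closedBall (0:ℂ) 1 := by
  intro z hz
  simp only [Metric.mem_closedBall, Complex.dist_eq, sub_zero]
  exact le_of_lt hz

instance : IsFiniteMeasure (volume.restrict unitDisk) := by
  constructor
  rw [Measure.restrict_apply_univ]
  calc volume unitDisk ≤ volume (Metric.closedBall (0:ℂ) 1) := measure_mono unitDisk_subset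
    _ < ⊤ := measure_closedBall_lt_top

lemma memL2_of_continuous {f : ℂ → ℂ} (hf : Continuous f) :
    MemLp f 2 (volume.restrict unitDisk) := by
  obtain ⟨C, hC⟩ := (isCompact_closedBall (0:ℂ) 1).exists_bound_of_continuousOn hf.continuousOn
  have h1 : MemLp f ⊤ (volume.restrict unitDisk) := by
    refine memLp_top_of_bound hf.aestronglyMeasurable C ?_
    rw [ae_restrict_iff' measurableSet_unitDisk]
    exact Filter.Eventually.of_forall fun z hz => hC z (unitDisk_subset hz)
  exact h1.mono_exponent le_top

lemma continuous_scatter (p q : ℕ) (hp : 1 ≤ p) (hq : 1 ≤ q) : Continuous (scatter p q) := by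
  rw [scatter_eq p q hp hq]
  exact continuous_finset_sum _ fun j _ => (continuous_const.mul (continuous_gfun _ _))



/-! ### Part 4: span membership -/

noncomputable def Glp (a b : ℕ) : Lp ℂ 2 (volume.restrict unitDisk) :=
  (memL2_of_continuous (continuous_gfun a b)).toLp (gfun a b)

noncomputable def Slp (p q : ℕ) (hp : 1 ≤ p) (hq : 1 ≤ q) :
    Lp ℂ 2 (volume.restrict unitDisk) :=
  (memL2_of_continuous (continuous_scatter p q hp hq)).toLp (scatter p q)

noncomputable def V : Submodule ℂ (Lp ℂ 2 (volume.restrict unitDisk)) :=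
  Submodule.span ℂ (Set.range fun x : {pq : ℕ × ℕ // 1 ≤ pq.1 ∧ 1 ≤ pq.2} =>
    Slp x.1.1 x.1.2 x.2.1 x.2.2)

lemma toLp_sum {ι : Type} (s : Finset ι) (f : ι → ℂ → ℂ)
    (hf : ∀ i, MemLp (f i) 2 (volume.restrict unitDisk))
    (hsum : MemLp (fun z => ∑ i ∈ s, f i z) 2 (volume.restrict unitDisk)) :
    hsum.toLp _ = ∑ i ∈ s, (hf i).toLp (f i) := by
  induction s using Finset.cons_induction with
  | empty =>
    rw [Finset.sum_empty, ← MemLp.toLp_zero (MemLp.zero (p := 2) (μ := volume.restrict unitDisk) (ε := ℂ))]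
    exact MemLp.toLp_congr _ _ (Filter.EventuallyEq.of_eq (by funext z; simp))
  | cons a s ha ih =>
    have h1 : MemLp (fun z => ∑ i ∈ s, f i z) 2 (volume.restrict unitDisk) :=
      memLp_finset_sum s (fun i _ => hf i)
    have h2 : hsum.toLp _ = ((hf a).add h1).toLp (f a + fun z => ∑ i ∈ s, f i z) := by
      refine MemLp.toLp_congr _ _ (Filter.EventuallyEq.of_eq ?_)
      funext z; simp [Finset.sum_cons]
    rw [h2, MemLp.toLp_add, ih h1, Finset.sum_cons]
    exact h1

lemma Slp_eq_sum (p q : ℕ) (hp : 1 ≤ p) (hq : 1 ≤ q) :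
    Slp p q hp hq = ∑ j ∈ Finset.range (p+q), scoef p q j • Glp (j-p) (j-q) := by
  have hterm : ∀ j : ℕ, MemLp (fun z => scoef p q j * gfun (j-p) (j-q) z) 2
      (volume.restrict unitDisk) := fun j =>
    (memL2_of_continuous (continuous_gfun (j-p) (j-q))).const_mul (scoef p q j)
  have h1 : MemLp (fun z => ∑ j ∈ Finset.range (p+q), scoef p q j * gfun (j-p) (j-q) z) 2
      (volume.restrict unitDisk) := memLp_finset_sum _ fun j _ => hterm j
  have h2 : Slp p q hp hq = h1.toLp _ :=
    MemLp.toLp_congr _ _ (Filter.EventuallyEq.of_eq (scatter_eq p q hp hq))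
  rw [h2, toLp_sum _ _ hterm]
  refine Finset.sum_congr rfl fun j _ => ?_
  have h3 : (hterm j).toLp _
      = ((memL2_of_continuous (continuous_gfun (j-p) (j-q))).const_smul (scoef p q j)).toLp
          (scoef p q j • gfun (j-p) (j-q)) :=
    MemLp.toLp_congr _ _ (Filter.EventuallyEq.of_eq (by funext z; simp [smul_eq_mul]))
  rw [h3, MemLp.toLp_const_smul]
  rfl

lemma scoef_top_ne (a b : ℕ) : scoef (b+1) (a+1) (a+b+1) ≠ 0 := by
  unfold scoef
  have e1 : b + 1 + (a + 1) - 1 = a + b + 1 := by omega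
  rw [e1]
  refine mul_ne_zero (mul_ne_zero (mul_ne_zero (mul_ne_zero ?_ ?_) ?_) ?_) ?_
  · refine div_ne_zero (pow_ne_zero _ (by norm_num)) ?_
    refine mul_ne_zero ?_ ?_
    · exact Nat.cast_ne_zero.mpr (by omega)
    · exact Nat.cast_ne_zero.mpr (Nat.factorial_ne_zero _)
  · rw [Nat.choose_self]; norm_num
  · exact pow_ne_zero _ (by norm_num)
  · exact Nat.cast_ne_zero.mpr (by rw [Ne, Nat.descFactorial_eq_zero_iff_lt]; omega)
  · exact Nat.cast_ne_zero.mpr (by rw [Ne, Nat.descFactorial_eq_zero_iff_lt]; omega)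

lemma scoef_eq_zero_left {p q j : ℕ} (h : j < p) : scoef p q j = 0 := by
  unfold scoef
  rw [Nat.descFactorial_eq_zero_iff_lt.mpr h]
  simp

lemma scoef_eq_zero_right {p q j : ℕ} (h : j < q) : scoef p q j = 0 := by
  unfold scoef
  rw [Nat.descFactorial_eq_zero_iff_lt.mpr h]
  simp

lemma Glp_mem : ∀ n a b : ℕ, a + b = n → Glp a b ∈ V := by
  intro n
  induction n using Nat.strong_induction_on with
  | _ n IH =>
    intro a b hab
    have hsum := Slp_eq_sum (b+1) (a+1) (by omega) (by omega)
    have hrange : (b+1) + (a+1) = a + b + 2 := by omega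
    rw [hrange, Finset.sum_range_succ] at hsum
    have hja : a + b + 1 - (b+1) = a := by omega
    have hjb : a + b + 1 - (a+1) = b := by omega
    rw [hja, hjb] at hsum
    have hct := scoef_top_ne a b
    have hSlpV : Slp (b+1) (a+1) (by omega) (by omega) ∈ V :=
      Submodule.subset_span ⟨⟨(b+1, a+1), by constructor <;> omega⟩, rfl⟩
    have hsumV : (∑ j ∈ Finset.range (a+b+1),
        scoef (b+1) (a+1) j • Glp (j-(b+1)) (j-(a+1))) ∈ V := by
      refine Submodule.sum_mem V fun j hj => ?_
      by_cases h0 : scoef (b+1) (a+1) j = 0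
      · rw [h0, zero_smul]; exact V.zero_mem
      · have hjp : b + 1 ≤ j := by
          by_contra hc
          exact h0 (scoef_eq_zero_left (by omega))
        have hjq : a + 1 ≤ j := by
          by_contra hc
          exact h0 (scoef_eq_zero_right (by omega))
        have hjlt : j < a + b + 1 := Finset.mem_range.mp hj
        refine V.smul_mem _ (IH ((j-(b+1)) + (j-(a+1))) (by omega) _ _ rfl)
    have hG : Glp a b = (scoef (b+1) (a+1) (a+b+1))⁻¹ •
        (Slp (b+1) (a+1) (by omega) (by omega) - ∑ j ∈ Finset.range (a+b+1),
          scoef (b+1) (a+1) j • Glp (j-(b+1)) (j-(a+1))) := by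
      rw [hsum]
      rw [add_sub_cancel_left, smul_smul, inv_mul_cancel₀ hct, one_smul]
    rw [hG]
    exact V.smul_mem _ (V.sub_mem hSlpV hsumV)

/-! ### Part 5a: Stone–Weierstrass on the closed disk -/

abbrev Kd : Set ℂ := Metric.closedBall (0:ℂ) 1

instance : CompactSpace Kd := isCompact_iff_compactSpace.mp (isCompact_closedBall (0:ℂ) 1)

noncomputable def monoK (i : ℕ × ℕ) : C(Kd, ℂ) :=
  ⟨fun z => mono i.1 i.2 (z : ℂ), (continuous_mono i.1 i.2).comp continuous_subtype_val⟩

noncomputable def W : Submodule ℂ C(Kd, ℂ) := Submodule.span ℂ (Set.range monoK)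

lemma one_mem_W : (1 : C(Kd,ℂ)) ∈ W := by
  have h : (1 : C(Kd,ℂ)) = monoK (0,0) := by
    ext z; simp [monoK, mono]
  rw [h]; exact Submodule.subset_span ⟨(0,0), rfl⟩

lemma monoK_mul (i j : ℕ×ℕ) : monoK i * monoK j = monoK (i.1+j.1, i.2+j.2) := by
  ext z
  simp only [ContinuousMap.mul_apply, monoK, ContinuousMap.coe_mk, mono, pow_add]
  ring

lemma mul_mem_W (x y : C(Kd,ℂ)) (hx : x ∈ W) (hy : y ∈ W) : x * y ∈ W := by
  have h := Submodule.mul_mem_mul hx hy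
  rw [W, Submodule.span_mul_span] at h
  refine Submodule.span_le.mpr ?_ h
  rintro f ⟨f1, hf1, f2, hf2, rfl⟩
  obtain ⟨i, rfl⟩ := hf1
  obtain ⟨j, rfl⟩ := hf2
  exact Submodule.subset_span ⟨(i.1+j.1, i.2+j.2), (monoK_mul i j).symm⟩

lemma star_monoK (i : ℕ×ℕ) : star (monoK i) = monoK (i.2, i.1) := by
  ext z
  simp only [ContinuousMap.star_apply, monoK, ContinuousMap.coe_mk, mono, star_mul', star_pow,
    starRingEnd_apply, star_star]
  exact mul_comm _ _

lemma star_mem_W (x : C(Kd,ℂ)) (hx : x ∈ W) : star x ∈ W := by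
  induction hx using Submodule.span_induction with
  | mem f hf =>
    obtain ⟨i, rfl⟩ := hf
    rw [star_monoK]
    exact Submodule.subset_span ⟨(i.2, i.1), rfl⟩
  | zero => rw [star_zero]; exact W.zero_mem
  | add f g _ _ hf hg => rw [star_add]; exact W.add_mem hf hg
  | smul c f _ hf => rw [star_smul]; exact W.smul_mem _ hf

noncomputable def WA : StarSubalgebra ℂ C(Kd,ℂ) where
  toSubalgebra := W.toSubalgebra one_mem_W mul_mem_W
  star_mem' := star_mem_W _

lemma mem_WA_iff (x : C(Kd,ℂ)) : x ∈ WA ↔ x ∈ W := Iff.rfl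

lemma WA_separates : WA.SeparatesPoints := by
  intro x y hxy
  refine ⟨fun z => (z : ℂ), ⟨monoK (1,0), ?_, ?_⟩, ?_⟩
  · exact Submodule.subset_span ⟨(1,0), rfl⟩
  · funext z; simp [monoK, mono]
  · simpa using fun h => hxy (Subtype.ext h)

lemma W_approx (f : C(Kd,ℂ)) {δ : ℝ} (hδ : 0 < δ) : ∃ P ∈ W, dist f P < δ := by
  have htop := ContinuousMap.starSubalgebra_topologicalClosure_eq_top_of_separatesPoints WA
    WA_separates
  have hf : f ∈ WA.topologicalClosure := htop ▸ trivial
  have hf' : f ∈ closure (WA : Set C(Kd,ℂ)) := hf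
  rw [Metric.mem_closure_iff] at hf'
  obtain ⟨P, hP, hdist⟩ := hf' δ hδ
  exact ⟨P, hP, hdist⟩

/-! ### Part 5c: density -/

lemma unitDisk_eq_ball : unitDisk = Metric.ball (0:ℂ) 1 := by
  ext z; simp [unitDisk, Metric.mem_ball, Complex.dist_eq]

lemma coe_nnreal_pi : (NNReal.pi : ℝ≥0∞) = ENNReal.ofReal Real.pi := by
  rw [← NNReal.coe_real_pi, ENNReal.ofReal_coe_nnreal]

lemma volume_unitDisk : volume unitDisk = ENNReal.ofReal Real.pi := by
  rw [unitDisk_eq_ball, Complex.volume_ball, coe_nnreal_pi]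
  simp

lemma volume_unitDisk_ne_top : volume unitDisk ≠ ⊤ := by
  rw [volume_unitDisk]; exact ENNReal.ofReal_ne_top

lemma one_sub_normSq_ne_zero {z : ℂ} (hz : z ∈ unitDisk) :
    (1 : ℂ) - (Complex.normSq z : ℂ) ≠ 0 := by
  intro h
  rw [sub_eq_zero] at h
  have h2 : Complex.normSq z = 1 := by exact_mod_cast h.symm
  have h3 : ‖z‖ < 1 := hz
  rw [Complex.normSq_eq_norm_sq] at h2
  nlinarith [norm_nonneg z]

lemma toLp_sum_smul (s : Finset (ℕ×ℕ)) (c : ℕ×ℕ → ℂ)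
    (hm : MemLp (fun z => ∑ i ∈ s, c i * gfun i.1 i.2 z) 2 (volume.restrict unitDisk)) :
    hm.toLp _ = ∑ i ∈ s, c i • Glp i.1 i.2 := by
  rw [toLp_sum s (fun i => fun z => c i * gfun i.1 i.2 z)
      (fun i => (memL2_of_continuous (continuous_gfun i.1 i.2)).const_mul (c i)) hm]
  refine Finset.sum_congr rfl fun i _ => ?_
  have h3 := MemLp.toLp_congr ((memL2_of_continuous (continuous_gfun i.1 i.2)).const_mul (c i))
    ((memL2_of_continuous (continuous_gfun i.1 i.2)).const_smul (c i))
    (Filter.EventuallyEq.of_eq (by funext z; simp [smul_eq_mul]))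
  rw [h3, MemLp.toLp_const_smul]
  rfl

lemma cutoff_exists {g : ℂ → ℂ} (hg : Continuous g) {C : ℝ} (hC : ∀ z, ‖g z‖ ≤ C)
    {η : ℝ} (hη : 0 < η) :
    ∃ g₂ : ℂ → ℂ, Continuous g₂ ∧ (∃ r₂ : ℝ, r₂ < 1 ∧ ∀ z : ℂ, r₂ ≤ ‖z‖ → g₂ z = 0) ∧
      eLpNorm (g - g₂) 2 (volume.restrict unitDisk) ≤ ENNReal.ofReal η := by
  have hC0 : 0 ≤ C := le_trans (norm_nonneg _) (hC 0)
  set C' : ℝ := C + 1 with hC'def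
  have hC'pos : 0 < C' := by positivity
  have hπ : (0:ℝ) < Real.pi := Real.pi_pos
  set t : ℝ := min 1 ((η/C')^2 / Real.pi) with htdef
  have ht0 : 0 < t := lt_min one_pos (by positivity)
  have ht1 : t ≤ 1 := min_le_left _ _
  have htπ : Real.pi * t ≤ (η/C')^2 := by
    have := min_le_right 1 ((η/C')^2 / Real.pi)
    calc Real.pi * t ≤ Real.pi * ((η/C')^2 / Real.pi) := by
          exact mul_le_mul_of_nonneg_left this hπ.le
      _ = (η/C')^2 := by field_simp
  set r₁ : ℝ := Real.sqrt (1 - t) with hr₁def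
  have hr₁0 : 0 ≤ r₁ := Real.sqrt_nonneg _
  have hr₁sq : r₁^2 = 1 - t := Real.sq_sqrt (by linarith)
  have hr₁lt : r₁ < 1 := by nlinarith
  set r₂ : ℝ := (r₁ + 1)/2 with hr₂def
  have hr₁₂ : r₁ < r₂ := by rw [hr₂def]; linarith
  have hr₂lt : r₂ < 1 := by rw [hr₂def]; linarith
  set ψ : ℂ → ℝ := fun z => max 0 (min 1 ((r₂ - ‖z‖)/(r₂ - r₁))) with hψdef
  have hψcont : Continuous ψ :=
    continuous_const.max (continuous_const.min
      ((continuous_const.sub continuous_norm).div_const _))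
  have hψ0le : ∀ z, 0 ≤ ψ z := fun z => le_max_left _ _
  have hψle1 : ∀ z, ψ z ≤ 1 := fun z => max_le zero_le_one (min_le_left _ _)
  have hψ1 : ∀ z : ℂ, ‖z‖ ≤ r₁ → ψ z = 1 := by
    intro z hzr
    have h1 : (1:ℝ) ≤ (r₂ - ‖z‖)/(r₂ - r₁) := by
      rw [le_div_iff₀ (by linarith)]
      linarith
    rw [hψdef]
    simp only [min_eq_left_iff.mpr h1]  -- min 1 x = 1 when 1 ≤ x
    exact max_eq_right zero_le_one
  have hψ0 : ∀ z : ℂ, r₂ ≤ ‖z‖ → ψ z = 0 := by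
    intro z hzr
    have h1 : (r₂ - ‖z‖)/(r₂ - r₁) ≤ 0 :=
      div_nonpos_of_nonpos_of_nonneg (by linarith) (by linarith)
    rw [hψdef]
    have h2 : min 1 ((r₂ - ‖z‖)/(r₂ - r₁)) ≤ 0 := le_trans (min_le_right _ _) h1
    simp only [max_eq_left h2]
  refine ⟨fun z => (ψ z : ℂ) * g z, (Complex.continuous_ofReal.comp hψcont).mul hg,
    ⟨r₂, hr₂lt, fun z hzr => by simp only [hψ0 z hzr]; simp⟩, ?_⟩
  -- the estimate
  set g₂ : ℂ → ℂ := fun z => (ψ z : ℂ) * g z with hg₂def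
  have hbound : ∀ z, ‖(g - g₂) z‖ ≤ C' := by
    intro z
    have : (g - g₂) z = ((1 - ψ z : ℝ) : ℂ) * g z := by
      simp only [Pi.sub_apply, hg₂def]
      push_cast
      ring
    rw [this, norm_mul, Complex.norm_real]
    have h1 : |1 - ψ z| ≤ 1 := by
      rw [abs_le]; constructor <;> [linarith [hψle1 z]; linarith [hψ0le z]]
    calc |1 - ψ z| * ‖g z‖ ≤ 1 * C := by
          exact mul_le_mul h1 (hC z) (norm_nonneg _) zero_le_one
      _ ≤ C' := by rw [one_mul]; linarith
  set S : Set ℂ := {z | r₁ < ‖z‖} with hSdef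
  have hSmeas : MeasurableSet S := (isOpen_lt continuous_const continuous_norm).measurableSet
  have h1 : (g - g₂) = S.indicator (g - g₂) := by
    funext z
    by_cases hzS : z ∈ S
    · rw [Set.indicator_of_mem hzS]
    · rw [Set.indicator_of_notMem hzS]
      have hzr : ‖z‖ ≤ r₁ := not_lt.mp hzS
      simp only [Pi.sub_apply, hg₂def, hψ1 z hzr]
      push_cast
      ring
  rw [h1, eLpNorm_indicator_eq_eLpNorm_restrict hSmeas, Measure.restrict_restrict hSmeas]
  refine le_trans (eLpNorm_le_of_ae_bound (C := C') (Filter.Eventually.of_forall hbound)) ?_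
  rw [Measure.restrict_apply_univ]
  -- volume (S ∩ unitDisk) ≤ ofReal (π * t)
  have hvol : volume (S ∩ unitDisk) ≤ ENNReal.ofReal (Real.pi * t) := by
    have hsub : S ∩ unitDisk ⊆ Metric.ball (0:ℂ) 1 \ Metric.closedBall (0:ℂ) r₁ := by
      rintro z ⟨hzS, hzD⟩
      constructor
      · rw [← unitDisk_eq_ball]; exact hzD
      · intro hmem
        rw [Metric.mem_closedBall, Complex.dist_eq, sub_zero] at hmem
        exact absurd hmem (not_le.mpr hzS)
    refine le_trans (measure_mono hsub) ?_
    have hsub2 : Metric.closedBall (0:ℂ) r₁ ⊆ Metric.ball (0:ℂ) 1 :=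
      Metric.closedBall_subset_ball hr₁lt
    rw [measure_diff hsub2 Metric.isClosed_closedBall.measurableSet.nullMeasurableSet
      (ne_of_lt (lt_of_le_of_lt (measure_mono hsub2) measure_ball_lt_top))]
    rw [Complex.volume_ball, Complex.volume_closedBall, coe_nnreal_pi]
    rw [← ENNReal.ofReal_pow zero_le_one, ← ENNReal.ofReal_pow hr₁0,
      ← ENNReal.ofReal_mul (by positivity), ← ENNReal.ofReal_mul (by positivity),
      ← ENNReal.ofReal_sub _ (by positivity)]
    refine le_of_eq (congrArg _ ?_)
    rw [hr₁sq]
    ring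
  have hexp : ((2:ℝ≥0∞).toReal)⁻¹ = (2:ℝ)⁻¹ := by norm_num
  calc volume (S ∩ unitDisk) ^ ((2:ℝ≥0∞).toReal)⁻¹ * ENNReal.ofReal C'
      ≤ ENNReal.ofReal (Real.pi * t) ^ ((2:ℝ)⁻¹) * ENNReal.ofReal C' := by
        rw [hexp]
        exact mul_le_mul_left (ENNReal.rpow_le_rpow hvol (by norm_num)) _
    _ = ENNReal.ofReal ((Real.pi * t) ^ ((2:ℝ)⁻¹) * C') := by
        rw [ENNReal.ofReal_rpow_of_nonneg (by positivity) (by norm_num),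
          ← ENNReal.ofReal_mul (by positivity)]
    _ ≤ ENNReal.ofReal η := by
        refine ENNReal.ofReal_le_ofReal ?_
        have hsq : (Real.pi * t) ^ ((2:ℝ)⁻¹) = Real.sqrt (Real.pi * t) := by
          rw [Real.sqrt_eq_rpow, one_div]
        rw [hsq]
        have h2 : Real.sqrt (Real.pi * t) ≤ η / C' := by
          have h3 := Real.sqrt_le_sqrt htπ
          rwa [Real.sqrt_sq (by positivity)] at h3
        calc Real.sqrt (Real.pi * t) * C' ≤ (η / C') * C' := by
              exact mul_le_mul_of_nonneg_right h2 hC'pos.le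
          _ = η := by field_simp

lemma hdiv_continuous {g₂ : ℂ → ℂ} (hg₂ : Continuous g₂) {r₂ : ℝ} (hr₂ : r₂ < 1)
    (h0 : ∀ z, r₂ ≤ ‖z‖ → g₂ z = 0) :
    Continuous (fun z => (1 - (Complex.normSq z : ℂ))⁻¹ * g₂ z) := by
  rw [continuous_iff_continuousAt]
  intro z
  by_cases hz : ‖z‖ < 1
  · refine ContinuousAt.mul (ContinuousAt.inv₀ ?_ ?_) hg₂.continuousAt
    · exact (continuous_const.sub
        (Complex.continuous_ofReal.comp Complex.continuous_normSq)).continuousAt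
    · exact one_sub_normSq_ne_zero hz
  · have hmem : z ∈ {w : ℂ | r₂ < ‖w‖} := lt_of_lt_of_le hr₂ (not_lt.mp hz)
    have hopen : IsOpen {w : ℂ | r₂ < ‖w‖} :=
      isOpen_lt continuous_const continuous_norm
    have hev : (fun w => (1 - (Complex.normSq w : ℂ))⁻¹ * g₂ w) =ᶠ[nhds z] (fun _ => (0:ℂ)) := by
      filter_upwards [hopen.mem_nhds hmem] with w hw
      rw [h0 w (le_of_lt hw), mul_zero]
    exact ContinuousAt.congr continuousAt_const hev.symm

/-! ### Part 5d: density of the span -/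

lemma V_dense : Dense (V : Set (Lp ℂ 2 (volume.restrict unitDisk))) := by
  rw [Metric.dense_iff]
  intro F ε hε
  haveI : (volume.restrict unitDisk).WeaklyRegular :=
    MeasureTheory.Measure.WeaklyRegular.restrict_of_measure_ne_top volume_unitDisk_ne_top
  have hε4 : (0:ℝ) < ε/4 := by linarith
  obtain ⟨gb, hgclose, hgmem⟩ := (Lp.memLp F).exists_boundedContinuous_eLpNorm_sub_le
    (by norm_num : (2:ℝ≥0∞) ≠ ⊤) (ne_of_gt (ENNReal.ofReal_pos.mpr hε4))
  set g : ℂ → ℂ := ⇑gb with hgdef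
  have hgc : Continuous g := gb.continuous
  obtain ⟨g₂, hg₂c, ⟨r₂, hr₂lt, hg₂0⟩, hg₂close⟩ :=
    cutoff_exists hgc (fun z => gb.norm_coe_le_norm z) hε4
  set h : ℂ → ℂ := fun z => (1 - (Complex.normSq z : ℂ))⁻¹ * g₂ z with hhdef
  have hhc : Continuous h := hdiv_continuous hg₂c hr₂lt hg₂0
  set hK : C(Kd, ℂ) := ⟨fun x => h (x : ℂ), hhc.comp continuous_subtype_val⟩ with hKdef
  set δ : ℝ := (ε/4) / (Real.sqrt Real.pi + 1) with hδdef
  have hδpos : 0 < δ := by positivity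
  obtain ⟨P, hPW, hPdist⟩ := W_approx hK hδpos
  rw [W, Finsupp.mem_span_range_iff_exists_finsupp] at hPW
  obtain ⟨c, hc⟩ := hPW
  set Pf : ℂ → ℂ := fun z => ∑ i ∈ c.support, c i * gfun i.1 i.2 z with hPfdef
  have hPfc : Continuous Pf :=
    continuous_finset_sum _ fun i _ => continuous_const.mul (continuous_gfun i.1 i.2)
  have hPfmem : MemLp Pf 2 (volume.restrict unitDisk) :=
    memLp_finset_sum _ fun i _ => (memL2_of_continuous (continuous_gfun i.1 i.2)).const_mul (c i)
  set y : Lp ℂ 2 (volume.restrict unitDisk) := hPfmem.toLp Pf with hydef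
  have hyV : y ∈ V := by
    rw [hydef, toLp_sum_smul]
    exact Submodule.sum_mem V fun i _ => V.smul_mem _ (Glp_mem (i.1 + i.2) i.1 i.2 rfl)
  have hptw : ∀ z ∈ unitDisk, ‖g₂ z - Pf z‖ ≤ δ := by
    intro z hz
    have hzK : z ∈ Kd := unitDisk_subset hz
    have hne := one_sub_normSq_ne_zero hz
    have key1 : g₂ z = (1 - (Complex.normSq z : ℂ)) * hK ⟨z, hzK⟩ := by
      show g₂ z = (1 - (Complex.normSq z : ℂ)) * ((1 - (Complex.normSq z : ℂ))⁻¹ * g₂ z)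
      rw [← mul_assoc, mul_inv_cancel₀ hne, one_mul]
    have key2 : Pf z = (1 - (Complex.normSq z : ℂ)) * P ⟨z, hzK⟩ := by
      rw [← hc, Finsupp.sum, ContinuousMap.sum_apply, hPfdef, Finset.mul_sum]
      refine Finset.sum_congr rfl fun i _ => ?_
      show c i * gfun i.1 i.2 z = (1 - (Complex.normSq z : ℂ)) * ((c i • monoK i) ⟨z, hzK⟩)
      rw [ContinuousMap.smul_apply]
      show c i * gfun i.1 i.2 z = (1 - (Complex.normSq z : ℂ)) * (c i • mono i.1 i.2 z)
      simp only [gfun, smul_eq_mul]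
      rw [Complex.mul_conj]
      ring
    rw [key1, key2, ← mul_sub, norm_mul]
    have h1 : ‖(1:ℂ) - (Complex.normSq z : ℂ)‖ ≤ 1 := by
      have hzlt : ‖z‖ < 1 := hz
      have hnsq : 0 ≤ Complex.normSq z := Complex.normSq_nonneg z
      have hnsq1 : Complex.normSq z < 1 := by
        rw [Complex.normSq_eq_norm_sq]; nlinarith [norm_nonneg z]
      have : ((1:ℂ) - (Complex.normSq z : ℂ)) = ((1 - Complex.normSq z : ℝ) : ℂ) := by push_cast; ring
      rw [this, Complex.norm_real, Real.norm_eq_abs]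
      exact abs_le.mpr ⟨by linarith, by linarith⟩
    have h2 : ‖hK ⟨z, hzK⟩ - P ⟨z, hzK⟩‖ ≤ δ := by
      calc ‖hK ⟨z, hzK⟩ - P ⟨z, hzK⟩‖ = dist (hK ⟨z, hzK⟩) (P ⟨z, hzK⟩) := (dist_eq_norm _ _).symm
        _ ≤ dist hK P := ContinuousMap.dist_apply_le_dist _
        _ ≤ δ := hPdist.le
    calc ‖(1:ℂ) - (Complex.normSq z : ℂ)‖ * ‖hK ⟨z, hzK⟩ - P ⟨z, hzK⟩‖ ≤ 1 * δ :=
          mul_le_mul h1 h2 (norm_nonneg _) zero_le_one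
      _ = δ := one_mul δ
  have h3 : eLpNorm (g₂ - Pf) 2 (volume.restrict unitDisk) ≤ ENNReal.ofReal (ε/4) := by
    have hae : ∀ᵐ z ∂(volume.restrict unitDisk), ‖(g₂ - Pf) z‖ ≤ δ := by
      rw [ae_restrict_iff' measurableSet_unitDisk]
      exact Filter.Eventually.of_forall fun z hz => hptw z hz
    refine le_trans (eLpNorm_le_of_ae_bound hae) ?_
    rw [Measure.restrict_apply_univ, volume_unitDisk]
    have hexp : ((2:ℝ≥0∞).toReal)⁻¹ = (2:ℝ)⁻¹ := by norm_num
    rw [hexp]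
    calc ENNReal.ofReal Real.pi ^ ((2:ℝ)⁻¹) * ENNReal.ofReal δ
        = ENNReal.ofReal (Real.pi ^ ((2:ℝ)⁻¹) * δ) := by
          rw [ENNReal.ofReal_rpow_of_nonneg Real.pi_pos.le (by norm_num),
            ← ENNReal.ofReal_mul (by positivity)]
      _ ≤ ENNReal.ofReal (ε/4) := by
          refine ENNReal.ofReal_le_ofReal ?_
          have hsq : Real.pi ^ ((2:ℝ)⁻¹) = Real.sqrt Real.pi := by
            rw [Real.sqrt_eq_rpow, one_div]
          rw [hsq, hδdef]
          have hπpos : (0:ℝ) < Real.sqrt Real.pi + 1 := by positivity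
          have hfrac : Real.sqrt Real.pi / (Real.sqrt Real.pi + 1) ≤ 1 :=
            (div_le_one hπpos).mpr (by linarith)
          calc Real.sqrt Real.pi * (ε/4 / (Real.sqrt Real.pi + 1))
              = (ε/4) * (Real.sqrt Real.pi / (Real.sqrt Real.pi + 1)) := by ring
            _ ≤ (ε/4) * 1 := mul_le_mul_of_nonneg_left hfrac hε4.le
            _ = ε/4 := mul_one _
  have htot : eLpNorm (⇑F - Pf) 2 (volume.restrict unitDisk) ≤ ENNReal.ofReal (3*(ε/4)) := by
    have e1 : (⇑F - Pf) = ((⇑F - g) + (g - g₂)) + (g₂ - Pf) := by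
      funext z; simp only [Pi.sub_apply, Pi.add_apply]; ring
    rw [e1]
    have m1 : AEStronglyMeasurable (⇑F - g) (volume.restrict unitDisk) :=
      (Lp.memLp F).aestronglyMeasurable.sub hgc.aestronglyMeasurable
    have m2 : AEStronglyMeasurable (g - g₂) (volume.restrict unitDisk) :=
      hgc.aestronglyMeasurable.sub hg₂c.aestronglyMeasurable
    have m3 : AEStronglyMeasurable (g₂ - Pf) (volume.restrict unitDisk) :=
      hg₂c.aestronglyMeasurable.sub hPfc.aestronglyMeasurable
    calc eLpNorm (((⇑F - g) + (g - g₂)) + (g₂ - Pf)) 2 (volume.restrict unitDisk)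
        ≤ eLpNorm ((⇑F - g) + (g - g₂)) 2 (volume.restrict unitDisk)
            + eLpNorm (g₂ - Pf) 2 (volume.restrict unitDisk) :=
          eLpNorm_add_le (m1.add m2) m3 (by norm_num)
      _ ≤ (eLpNorm (⇑F - g) 2 (volume.restrict unitDisk)
            + eLpNorm (g - g₂) 2 (volume.restrict unitDisk))
            + eLpNorm (g₂ - Pf) 2 (volume.restrict unitDisk) :=
          add_le_add_left (eLpNorm_add_le m1 m2 (by norm_num)) _
      _ ≤ (ENNReal.ofReal (ε/4) + ENNReal.ofReal (ε/4)) + ENNReal.ofReal (ε/4) :=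
          add_le_add (add_le_add hgclose hg₂close) h3
      _ = ENNReal.ofReal (3*(ε/4)) := by
          rw [← ENNReal.ofReal_add hε4.le hε4.le, ← ENNReal.ofReal_add (by linarith) hε4.le]
          ring_nf
  have hFy : dist y F < ε := by
    rw [dist_comm, dist_eq_norm]
    have : F - y = MemLp.toLp (⇑F - Pf) ((Lp.memLp F).sub hPfmem) := by
      rw [MemLp.toLp_sub, Lp.toLp_coeFn]
      exact Lp.memLp F
    rw [this, Lp.norm_toLp]
    have h4 := ENNReal.toReal_mono ENNReal.ofReal_ne_top htot
    rw [ENNReal.toReal_ofReal (by linarith)] at h4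
    linarith
  exact ⟨y, Metric.mem_ball.mpr hFy, hyV⟩

end ScatterAux

/-- The span of the scattering polynomials is dense in L²(D, dxdy); moreover every
    scattering polynomial vanishes on the boundary circle. -/
theorem scatter_complete_in_L2_lebesgue :
    (∃ h : ∀ p q : ℕ, 1 ≤ p → 1 ≤ q → MemLp (scatter p q) 2 (volume.restrict unitDisk),
      Dense (↑(Submodule.span ℂ
        (Set.range fun x : {pq : ℕ × ℕ // 1 ≤ pq.1 ∧ 1 ≤ pq.2} =>
          (h x.1.1 x.1.2 x.2.1 x.2.2).toLp (scatter x.1.1 x.1.2)))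
        : Set (Lp ℂ 2 (volume.restrict unitDisk)))) ∧
    ∀ p q : ℕ, 1 ≤ p → 1 ≤ q → ∀ z : ℂ, ‖z‖ = 1 → scatter p q z = 0 := by
  constructor
  · refine ⟨fun p q hp hq =>
      ScatterAux.memL2_of_continuous (ScatterAux.continuous_scatter p q hp hq), ?_⟩
    exact ScatterAux.V_dense
  · intro p q hp hq z hz
    have h1 : z * (starRingEnd ℂ) z = 1 := by
      rw [Complex.mul_conj, Complex.normSq_eq_norm_sq, hz]
      norm_num
    simp [scatter, h1]
end
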